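/- arXiv:1312.2794 — 5 statements merged into one kernel-verified Lean document; each statement's English description precedes it below -/
import Mathlib

section
/- Let D be a nonempty convex open set in ℝ^d, let a ∈ D, and let d_a = dist(a, ∂D) > 0. Then for every x ∈ ℝ^d, |x - Π(x)| ≤ d_a^{-1} ⟨x - a, x - Π(x)⟩, where Π(x) denotes the metric projection of x onto closure D. -/
open scoped RealInnerProductSpace

theorem stmt2 (d : ℕ) (D : Set (EuclideanSpace ℝ (Fin d)))
    (hD : IsOpen D) (hconv : Convex ℝ D) (hne : D.Nonempty)
    (a : EuclideanSpace ℝ (Fin d)) (ha : a ∈ D)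
    (hda : 0 < Metric.infDist a (frontier D))
    (proj : EuclideanSpace ℝ (Fin d) → EuclideanSpace ℝ (Fin d))
    (hproj : ∀ z, proj z ∈ closure D ∧ ∀ y ∈ closure D, dist z (proj z) ≤ dist z y) :
    ∀ x : EuclideanSpace ℝ (Fin d),
      ‖x - proj x‖ ≤ (Metric.infDist a (frontier D))⁻¹ * ⟪x - a, x - proj x⟫ := by
  intro x
  set r := Metric.infDist a (frontier D) with hr
  -- ball a r ⊆ D
  have hball : Metric.ball a r ⊆ D := by
    have hdisj : Disjoint (Metric.ball a r) (frontier D) := Metric.disjoint_ball_infDist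
    have hsub : Metric.ball a r ⊆ D ∪ (closure D)ᶜ := by
      intro z hz
      by_cases hzc : z ∈ closure D
      · left
        by_contra hzD
        exact (hdisj.ne_of_mem hz ⟨hzc, by rwa [hD.interior_eq]⟩) rfl
      · exact Or.inr hzc
    exact (convex_ball a r).isPreconnected.subset_left_of_subset_union hD
      isClosed_closure.isOpen_compl
      (disjoint_compl_right.mono_right (Set.compl_subset_compl.2 subset_closure))
      hsub ⟨a, Metric.mem_ball_self hda, ha⟩
  have hcb : Metric.closedBall a r ⊆ closure D := by
    rw [← closure_ball a hda.ne']
    exact closure_mono hball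
  -- variational inequality
  have hvar : ∀ w ∈ closure D, ⟪x - proj x, w - proj x⟫ ≤ 0 := by
    haveI : Nonempty ↑(closure D) := ⟨⟨proj x, (hproj x).1⟩⟩
    apply (norm_eq_iInf_iff_real_inner_le_zero hconv.closure (hproj x).1).mp
    refine le_antisymm (le_ciInf fun w => ?_) (ciInf_le ⟨0, fun _ ⟨_, h⟩ => h ▸ norm_nonneg _⟩
      (⟨proj x, (hproj x).1⟩ : closure D))
    rw [← dist_eq_norm, ← dist_eq_norm]
    exact (hproj x).2 w w.2
  by_cases hx : x - proj x = 0
  · rw [hx]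
    simp
  · set v := x - proj x with hv
    have hvn : 0 < ‖v‖ := norm_pos_iff.2 hx
    set w : EuclideanSpace ℝ (Fin d) := a + r • (‖v‖⁻¹ • v) with hw
    have hwmem : w ∈ closure D := by
      apply hcb
      rw [Metric.mem_closedBall, dist_eq_norm, hw]
      have : a + r • ‖v‖⁻¹ • v - a = r • ‖v‖⁻¹ • v := by abel
      rw [this, norm_smul, norm_smul, norm_inv, norm_norm, Real.norm_eq_abs,
        abs_of_pos hda, inv_mul_cancel₀ hvn.ne', mul_one]
    have h1 := hvar w hwmem
    have hexp : ⟪v, w - proj x⟫ = ⟪v, a - proj x⟫ + r * ‖v‖ := by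
      have : w - proj x = (a - proj x) + r • (‖v‖⁻¹ • v) := by rw [hw]; abel
      rw [this, inner_add_right, real_inner_smul_right, real_inner_smul_right,
        real_inner_self_eq_norm_sq]
      field_simp
    rw [hexp] at h1
    have h2 : ⟪v, a - proj x⟫ = ‖v‖ ^ 2 - ⟪x - a, v⟫ := by
      have : (a - proj x : EuclideanSpace ℝ (Fin d)) = -(x - a) + v := by rw [hv]; abel
      rw [this, inner_add_right, inner_neg_right, real_inner_self_eq_norm_sq,
        real_inner_comm]
      ring
    rw [h2] at h1
    rw [inv_mul_eq_div, le_div_iff₀ hda]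
    nlinarith [sq_nonneg ‖v‖, hvn]
end

section
/- Let D ⊆ ℝ^d be open convex, a ∈ D, d_a = dist(a, ∂D). Let y: [0,∞) → ℝ^d be càdlàg with y(0) ∈ closure D, let x^n solve x^n_t = y_t - n ∫_0^t (x^n_s - Π(x^n_s)) ds, and set k^n_t = -n ∫_0^t (x^n_s - Π(x^n_s)) ds. Then for any q, δ > 0 with ω'_y(δ, q) < d_a/2, one has sup_{t ≤ q} |x^n_t - a| ≤ 2√7 (⌊q/δ⌋ + 1) sup_{t ≤ q} |y_t - a|. -/
open scoped RealInnerProductSpace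
open MeasureTheory Set Filter

variable {d : ℕ}

/-- A càdlàg function on `[0,∞)`: right-continuous with left limits. -/
def Cadlag (f : ℝ → EuclideanSpace ℝ (Fin d)) : Prop :=
  (∀ t : ℝ, 0 ≤ t → ContinuousWithinAt f (Set.Ici t) t) ∧
  (∀ t : ℝ, 0 < t → ∃ l, Filter.Tendsto f (nhdsWithin t (Set.Iio t)) (nhds l))

/-- `proj` is the metric projection (nearest-point map) onto `C`. -/
def IsProjOn (C : Set (EuclideanSpace ℝ (Fin d)))
    (proj : EuclideanSpace ℝ (Fin d) → EuclideanSpace ℝ (Fin d)) : Prop :=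
  ∀ z, proj z ∈ C ∧ ∀ w ∈ C, dist z (proj z) ≤ dist z w

/-- `x` solves the penalized equation `x t = y t - c ∫_0^t (x s - proj (x s)) ds`. -/
def PenalizedSol (proj : EuclideanSpace ℝ (Fin d) → EuclideanSpace ℝ (Fin d))
    (c : ℝ) (y x : ℝ → EuclideanSpace ℝ (Fin d)) : Prop :=
  (∀ t : ℝ, 0 ≤ t → IntervalIntegrable (fun s => x s - proj (x s)) volume 0 t) ∧
  (∀ t : ℝ, 0 ≤ t → x t = y t - c • ∫ s in (0:ℝ)..t, (x s - proj (x s)))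

/-- The oscillation of `f` on `[s, t)` is `< c`. -/
def OscLtOn (f : ℝ → EuclideanSpace ℝ (Fin d)) (s t c : ℝ) : Prop :=
  ∀ u ∈ Set.Ico s t, ∀ v ∈ Set.Ico s t, ‖f u - f v‖ < c

/-- `ω'_f(δ, q) < c`: there is a subdivision `0 = s 0 < ⋯ < s r = q` whose first `r - 1`
steps have length `≥ δ` and on whose half-open intervals `f` oscillates less than `c`. -/
def OmegaPrimeLt (f : ℝ → EuclideanSpace ℝ (Fin d)) (δ q c : ℝ) : Prop :=
  ∃ r : ℕ, 0 < r ∧ ∃ s : ℕ → ℝ, s 0 = 0 ∧ s r = q ∧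
    (∀ k < r, s k < s (k + 1)) ∧ (∀ k, k + 1 < r → δ ≤ s (k + 1) - s k) ∧
    ∀ k < r, OscLtOn f (s k) (s (k + 1)) c



lemma proj_var {C : Set (EuclideanSpace ℝ (Fin d))} (hC : Convex ℝ C)
    {proj : EuclideanSpace ℝ (Fin d) → EuclideanSpace ℝ (Fin d)}
    (hproj : ∀ z, proj z ∈ C ∧ ∀ w ∈ C, dist z (proj z) ≤ dist z w)
    (z : EuclideanSpace ℝ (Fin d)) : ∀ w ∈ C, ⟪z - proj z, w - proj z⟫ ≤ 0 := by
  have hne : Nonempty C := ⟨⟨proj z, (hproj z).1⟩⟩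
  have hmin : ‖z - proj z‖ = ⨅ w : C, ‖z - w‖ := by
    apply le_antisymm
    · exact le_ciInf fun w => by simpa [dist_eq_norm] using (hproj z).2 w w.2
    · exact ciInf_le ⟨0, by rintro _ ⟨w, rfl⟩; exact norm_nonneg _⟩
        (⟨proj z, (hproj z).1⟩ : C)
  exact (norm_eq_iInf_iff_real_inner_le_zero hC (hproj z).1).1 hmin

lemma proj_lip {C : Set (EuclideanSpace ℝ (Fin d))} (hC : Convex ℝ C)
    {proj : EuclideanSpace ℝ (Fin d) → EuclideanSpace ℝ (Fin d)}
    (hproj : ∀ z, proj z ∈ C ∧ ∀ w ∈ C, dist z (proj z) ≤ dist z w)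
    (z w : EuclideanSpace ℝ (Fin d)) : ‖proj z - proj w‖ ≤ ‖z - w‖ := by
  have h1 := proj_var hC hproj z (proj w) (hproj w).1
  have h2 := proj_var hC hproj w (proj z) (hproj z).1
  have key : ‖proj z - proj w‖ ^ 2 ≤ ⟪z - w, proj z - proj w⟫ := by
    have e1 : ⟪z - w, proj z - proj w⟫
        = -⟪z - proj z, proj w - proj z⟫ - ⟪w - proj w, proj z - proj w⟫
          + ⟪proj z - proj w, proj z - proj w⟫ := by
      simp only [inner_sub_left, inner_sub_right]
      linarith [real_inner_comm z w, real_inner_comm z (proj z), real_inner_comm z (proj w),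
        real_inner_comm w (proj z), real_inner_comm w (proj w),
        real_inner_comm (proj z) (proj w)]
    rw [e1, real_inner_self_eq_norm_sq]
    linarith
  have h3 : ⟪z - w, proj z - proj w⟫ ≤ ‖z - w‖ * ‖proj z - proj w‖ :=
    real_inner_le_norm _ _
  nlinarith [norm_nonneg (proj z - proj w), norm_nonneg (z - w)]

lemma proj_key {C : Set (EuclideanSpace ℝ (Fin d))} (hC : Convex ℝ C)
    {proj : EuclideanSpace ℝ (Fin d) → EuclideanSpace ℝ (Fin d)}
    (hproj : ∀ z, proj z ∈ C ∧ ∀ w ∈ C, dist z (proj z) ≤ dist z w)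
    {a : EuclideanSpace ℝ (Fin d)} {ρ : ℝ} (hρ : 0 ≤ ρ)
    (hball : Metric.closedBall a ρ ⊆ C) (z : EuclideanSpace ℝ (Fin d)) :
    ‖z - proj z‖ ^ 2 + ρ * ‖z - proj z‖ ≤ ⟪z - proj z, z - a⟫ := by
  by_cases h : z - proj z = 0
  · simp [h]
  · set e := z - proj z with he
    have hne : ‖e‖ ≠ 0 := norm_ne_zero_iff.2 h
    set u : EuclideanSpace ℝ (Fin d) := ‖e‖⁻¹ • e with hu
    have hunorm : ‖u‖ = 1 := by
      rw [hu, norm_smul, norm_inv, norm_norm, inv_mul_cancel₀ hne]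
    have hw : a + ρ • u ∈ C := by
      apply hball
      rw [Metric.mem_closedBall, dist_eq_norm, add_sub_cancel_left, norm_smul,
        hunorm, mul_one, Real.norm_eq_abs, abs_of_nonneg hρ]
    have hvar := proj_var hC hproj z (a + ρ • u) hw
    have heu : ⟪e, u⟫ = ‖e‖ := by
      rw [hu, real_inner_smul_right, real_inner_self_eq_norm_sq]
      field_simp
    have e2 : ⟪e, a + ρ • u - proj z⟫
        = ⟪e, a - z⟫ + ρ * ‖e‖ + ⟪e, e⟫ := by
      have : a + ρ • u - proj z = (a - z) + ρ • u + e := by rw [he]; abel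
      rw [this, inner_add_right, inner_add_right, real_inner_smul_right, heu]
    have e3 : ⟪e, a - z⟫ = -⟪e, z - a⟫ := by
      rw [← inner_neg_right]; congr 1; abel
    rw [e2, e3, real_inner_self_eq_norm_sq] at hvar
    linarith

/-- Lemma 2.2(i): a priori bound for solutions of the penalized equation. -/
theorem stmt4 (d : ℕ) (D : Set (EuclideanSpace ℝ (Fin d)))
    (hD : IsOpen D) (hconv : Convex ℝ D) (hne : D.Nonempty)
    (a : EuclideanSpace ℝ (Fin d)) (ha : a ∈ D)
    (proj : EuclideanSpace ℝ (Fin d) → EuclideanSpace ℝ (Fin d))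
    (hproj : IsProjOn (closure D) proj)
    (y : ℝ → EuclideanSpace ℝ (Fin d)) (hy : Cadlag y) (hy0 : y 0 ∈ closure D)
    (n : ℕ) (x : ℝ → EuclideanSpace ℝ (Fin d))
    (hx : PenalizedSol proj (n : ℝ) y x)
    (q δ : ℝ) (hq : 0 < q) (hδ : 0 < δ)
    (hω : OmegaPrimeLt y δ q (Metric.infDist a (frontier D) / 2)) :
    ∀ t ∈ Set.Icc (0:ℝ) q,
      ‖x t - a‖ ≤ 2 * Real.sqrt 7 * (⌊q / δ⌋₊ + 1) * ⨆ s : Set.Icc (0:ℝ) q, ‖y s - a‖ := by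
  classical
  obtain ⟨hint, heq⟩ := hx
  obtain ⟨r, hr, s, hs0, hsr, hlt, hstep, hosc⟩ := hω
  set da := Metric.infDist a (frontier D) with hda_def
  -- da > 0
  have hda : 0 < da := by
    by_contra hcon
    push_neg at hcon
    have h01 : s 0 < s 1 := hlt 0 hr
    have h := hosc 0 hr (s 0) ⟨le_refl _, h01⟩ (s 0) ⟨le_refl _, h01⟩
    simp only [sub_self, norm_zero] at h
    linarith
  -- ball a da ⊆ D
  have hballD : Metric.ball a da ⊆ D := by
    intro b hb
    by_contra hbD
    have hfr : (segment ℝ a b ∩ frontier D).Nonempty := by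
      by_contra hemp
      rw [Set.not_nonempty_iff_eq_empty] at hemp
      have hsub : segment ℝ a b ⊆ D ∪ (closure D)ᶜ := by
        intro p hp
        by_cases hpD : p ∈ D
        · exact Or.inl hpD
        · refine Or.inr fun hpc => ?_
          have hpf : p ∈ frontier D := by
            rw [hD.frontier_eq]
            exact ⟨hpc, hpD⟩
          have : p ∈ segment ℝ a b ∩ frontier D := ⟨hp, hpf⟩
          rw [hemp] at this
          exact this
      have hdisj : Disjoint D (closure D)ᶜ :=
        disjoint_compl_right.mono_left subset_closure
      rcases (convex_segment a b).isPreconnected.subset_or_subset hD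
          isClosed_closure.isOpen_compl hdisj hsub with hl | hrr
      · exact hbD (hl (right_mem_segment ℝ a b))
      · exact (hrr (left_mem_segment ℝ a b)) (subset_closure ha)
    obtain ⟨c, hcseg, hcfr⟩ := hfr
    have hc1 : c ∈ Metric.closedBall a (dist a b) :=
      (convex_closedBall a (dist a b)).segment_subset
        (Metric.mem_closedBall_self dist_nonneg)
        (by simp [Metric.mem_closedBall, dist_comm]) hcseg
    have hc2 : da ≤ dist a c := Metric.infDist_le_dist_of_mem hcfr
    rw [Metric.mem_closedBall, dist_comm] at hc1
    rw [Metric.mem_ball, dist_comm] at hb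
    linarith
  have hcball : Metric.closedBall a da ⊆ closure D := by
    rw [← closure_ball a hda.ne']
    exact closure_mono hballD
  have hcconv : Convex ℝ (closure D) := hconv.closure
  have hkey := proj_key hcconv hproj hda.le hcball
  set g : ℝ → EuclideanSpace ℝ (Fin d) := fun τ => x τ - proj (x τ) with hg_def
  set F : ℝ → EuclideanSpace ℝ (Fin d) := fun τ => ∫ σ in (0:ℝ)..τ, g σ with hF_def
  have hxF : ∀ τ, 0 ≤ τ → x τ = y τ - (n:ℝ) • F τ := heq
  -- continuity of the primitive
  have hFcont : ∀ b : ℝ, 0 ≤ b → ContinuousOn F (Icc 0 b) := by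
    intro b hb
    have h := intervalIntegral.continuousOn_primitive_interval' (hint b hb) left_mem_uIcc
    rwa [uIcc_of_le hb] at h
  -- continuity of x and g within Ici
  have hprojc : Continuous proj := by
    have : LipschitzWith 1 proj := LipschitzWith.of_dist_le_mul fun z w => by
      simpa [dist_eq_norm] using proj_lip hcconv hproj z w
    exact this.continuous
  have hxc : ∀ t : ℝ, 0 ≤ t → ContinuousWithinAt x (Ici t) t := by
    intro t ht
    have hF : ContinuousWithinAt F (Ici t) t := by
      have hc := (hFcont (t + 1) (by linarith)) t ⟨ht, by linarith⟩
      have hmem : Icc 0 (t + 1) ∈ nhdsWithin t (Set.Ici t) :=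
        Filter.mem_of_superset (Icc_mem_nhdsGE_of_mem ⟨le_refl t, by linarith⟩)
          (Icc_subset_Icc ht le_rfl)
      exact hc.mono_of_mem_nhdsWithin hmem
    have hyx : ContinuousWithinAt (fun τ => y τ - (n:ℝ) • F τ) (Ici t) t :=
      (hy.1 t ht).sub (hF.const_smul (n:ℝ))
    exact hyx.congr (fun τ hτ => hxF τ (le_trans ht hτ)) (hxF t ht)
  have hgc : ∀ t : ℝ, 0 ≤ t → ContinuousWithinAt g (Ici t) t := by
    intro t ht
    exact (hxc t ht).sub (hprojc.continuousAt.comp_continuousWithinAt (hxc t ht))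
  have hmeas : ∀ t : ℝ, 0 ≤ t → StronglyMeasurableAtFilter g (nhdsWithin t (Set.Ioi t)) volume := by
    intro t ht
    refine ⟨Ioc t (t + 1), Ioc_mem_nhdsGT_of_mem ⟨le_refl t, by linarith⟩, ?_⟩
    have hi : IntegrableOn g (Ioc 0 (t + 1)) volume := by
      have h := hint (t + 1) (by linarith)
      rw [intervalIntegrable_iff, uIoc_of_le (by linarith : (0:ℝ) ≤ t + 1)] at h
      exact h
    exact hi.aestronglyMeasurable.mono_measure
      (Measure.restrict_mono (show Ioc t (t+1) ⊆ Ioc 0 (t+1) from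
        fun τ hτ => ⟨lt_of_le_of_lt ht hτ.1, hτ.2⟩) le_rfl)
  have hFder : ∀ t : ℝ, 0 ≤ t → HasDerivWithinAt F (g t) (Ici t) t := by
    intro t ht
    exact intervalIntegral.integral_hasDerivWithinAt_right (hint t ht) (hmeas t ht)
      ((hgc t ht).mono (Ioi_subset_Ici le_rfl))
  -- monotonicity of the subdivision
  have hmono' : ∀ k ≤ r, ∀ j ≤ k, s j ≤ s k := by
    intro k
    induction k with
    | zero => intro _ j hj; rw [Nat.le_zero.mp hj]
    | succ k ih =>
      intro hk j hj
      rcases Nat.lt_succ_iff_lt_or_eq.mp (Nat.lt_succ_of_le hj) with h | h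
      · exact le_trans (ih (by omega) j (by omega)) (hlt k (by omega)).le
      · rw [h]
  have hs_mem : ∀ k ≤ r, s k ∈ Set.Icc (0:ℝ) q := by
    intro k hk
    constructor
    · rw [← hs0]; exact hmono' k hk 0 (Nat.zero_le k)
    · rw [← hsr]; exact hmono' r le_rfl k hk
  have hfind : ∀ t : ℝ, 0 ≤ t → t < q → ∃ k, k < r ∧ s k ≤ t ∧ t < s (k + 1) := by
    intro t ht0 htq
    set P : ℕ → Prop := fun j => s j ≤ t with hP
    have hP0 : P 0 := by rw [hP]; simpa [hs0] using ht0
    set k := Nat.findGreatest P r with hk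
    have hkr : k ≤ r := Nat.findGreatest_le r
    have hsk : P k := Nat.findGreatest_spec (Nat.zero_le r) hP0
    have hklt : k < r := by
      rcases eq_or_lt_of_le hkr with he | h
      · exfalso; rw [he] at hsk; simp only [hP, hsr] at hsk; linarith
      · exact h
    refine ⟨k, hklt, hsk, ?_⟩
    by_contra hle
    push_neg at hle
    exact Nat.findGreatest_is_greatest (Nat.lt_succ_self k) hklt hle
  -- bound on y
  have hRbal : ∀ t ∈ Set.Icc (0:ℝ) q, ∃ k ≤ r, ‖y t - a‖ ≤ ‖y (s k) - a‖ + da / 2 := by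
    intro t ht
    rcases eq_or_lt_of_le ht.2 with he | hltq
    · exact ⟨r, le_rfl, by rw [he, ← hsr]; linarith⟩
    · obtain ⟨k, hk, hk1, hk2⟩ := hfind t ht.1 hltq
      refine ⟨k, hk.le, ?_⟩
      have hos := hosc k hk t ⟨hk1, hk2⟩ (s k) ⟨le_refl _, hlt k hk⟩
      have : ‖y t - a‖ ≤ ‖y t - y (s k)‖ + ‖y (s k) - a‖ := by
        have he2 : y t - a = (y t - y (s k)) + (y (s k) - a) := by abel
        rw [he2]; exact norm_add_le _ _
      linarith
  have hbdd : BddAbove (Set.range fun σ : Set.Icc (0:ℝ) q => ‖y σ - a‖) := by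
    refine ⟨(Finset.range (r + 1)).sup' ⟨0, Finset.mem_range.mpr (Nat.succ_pos r)⟩
      (fun k => ‖y (s k) - a‖) + da / 2, ?_⟩
    rintro _ ⟨⟨t, ht⟩, rfl⟩
    obtain ⟨k, hk, hbnd⟩ := hRbal t ht
    have hle : ‖y (s k) - a‖ ≤ (Finset.range (r + 1)).sup'
        ⟨0, Finset.mem_range.mpr (Nat.succ_pos r)⟩ (fun k => ‖y (s k) - a‖) :=
      Finset.le_sup' (fun k => ‖y (s k) - a‖) (Finset.mem_range.mpr (Nat.lt_succ_of_le hk))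
    simp only
    linarith
  set R := ⨆ σ : Set.Icc (0:ℝ) q, ‖y σ - a‖ with hR_def
  have hRy : ∀ t ∈ Set.Icc (0:ℝ) q, ‖y t - a‖ ≤ R := by
    intro t ht
    exact le_ciSup hbdd (⟨t, ht⟩ : Set.Icc (0:ℝ) q)
  have hR0 : 0 ≤ R := le_trans (norm_nonneg _) (hRy 0 ⟨le_refl 0, hq.le⟩)
  -- per-interval a priori estimate
  have hstepkey : ∀ k < r, ∀ t ∈ Set.Icc (s k) (s (k + 1)),
      ‖x t - a‖ ≤ ‖x (s k) - a‖ + 2 * R := by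
    intro k hk t ht
    have hu0 : 0 ≤ s k := (hs_mem k hk.le).1
    have huv : s k < s (k + 1) := hlt k hk
    have hvq : s (k + 1) ≤ q := (hs_mem (k + 1) hk).2
    set u := s k with hu_def
    set v := s (k + 1) with hv_def
    set w : ℝ → EuclideanSpace ℝ (Fin d) := fun τ => (y u - a) - (n:ℝ) • F τ with hw_def
    set φ : ℝ → ℝ := fun τ => ⟪w τ, w τ⟫ with hφ_def
    have hwx : ∀ τ, 0 ≤ τ → w τ = (x τ - a) + (y u - y τ) := by
      intro τ hτ
      have h1 : (n:ℝ) • F τ = y τ - x τ := by rw [hxF τ hτ]; abel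
      rw [hw_def]; simp only; rw [h1]; abel
    have hφcont : ContinuousOn φ (Icc u v) := by
      have hsub : Icc u v ⊆ Icc 0 q := Icc_subset_Icc hu0 hvq
      have hFc : ContinuousOn F (Icc u v) := (hFcont q hq.le).mono hsub
      have hwc : ContinuousOn w (Icc u v) := continuousOn_const.sub (hFc.const_smul (n:ℝ))
      exact hwc.inner hwc
    have hA : ∀ τ ∈ Ico u v, φ τ ≤ φ u := by
      intro τ' hτ'
      have himg := image_le_of_deriv_right_le_deriv_boundary
        (f := φ) (f' := fun σ => -(2 * (n:ℝ)) * ⟪w σ, g σ⟫) (a := u) (b := τ')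
        (B := fun _ => φ u) (B' := fun _ => 0)
        (hφcont.mono (Icc_subset_Icc le_rfl hτ'.2.le))
        (fun σ hσ => ?_) (le_refl (φ u)) continuousOn_const
        (fun σ hσ => hasDerivWithinAt_const σ _ _) (fun σ hσ => ?_)
      · exact himg ⟨hτ'.1, le_rfl⟩
      -- derivative of φ
      · have hσ0 : 0 ≤ σ := le_trans hu0 hσ.1
        have hwder : HasDerivWithinAt w (-((n:ℝ) • g σ)) (Ici σ) σ :=
          ((hFder σ hσ0).const_smul (n:ℝ)).const_sub _
        have hder := hwder.inner ℝ hwder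
        refine hder.congr_deriv ?_
        simp only [inner_neg_right, inner_neg_left, real_inner_smul_left,
          real_inner_smul_right, real_inner_comm (w σ) (g σ)]
        ring
      -- sign of the derivative
      · have hσ0 : 0 ≤ σ := le_trans hu0 hσ.1
        have hσv : σ < v := lt_of_lt_of_le hσ.2 hτ'.2.le
        have hkey' := hkey (x σ)
        have hos : ‖y u - y σ‖ ≤ da / 2 :=
          (hosc k hk u ⟨le_refl _, huv⟩ σ ⟨hσ.1, hσv⟩).le
        have habs : |⟪y u - y σ, g σ⟫| ≤ ‖y u - y σ‖ * ‖g σ‖ := abs_real_inner_le_norm _ _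
        have hsplit : ⟪w σ, g σ⟫ = ⟪x σ - a, g σ⟫ + ⟪y u - y σ, g σ⟫ := by
          rw [hwx σ hσ0, inner_add_left]
        have hflip : ⟪x σ - a, g σ⟫ = ⟪g σ, x σ - a⟫ := real_inner_comm _ _
        have hgn : 0 ≤ ‖g σ‖ := norm_nonneg _
        have hwg : 0 ≤ ⟪w σ, g σ⟫ := by
          rw [hsplit, hflip]
          have h1 : ‖g σ‖ ^ 2 + da * ‖g σ‖ ≤ ⟪g σ, x σ - a⟫ := hkey'
          have h2 : -(da / 2 * ‖g σ‖) ≤ ⟪y u - y σ, g σ⟫ := by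
            have h3 := neg_abs_le ⟪y u - y σ, g σ⟫
            have h4 : ‖y u - y σ‖ * ‖g σ‖ ≤ da / 2 * ‖g σ‖ :=
              mul_le_mul_of_nonneg_right hos hgn
            linarith
          linarith [pow_two_nonneg ‖g σ‖, mul_nonneg hda.le hgn]
        have hn0 : (0:ℝ) ≤ (n:ℝ) := Nat.cast_nonneg n
        have hfin : 0 ≤ 2 * (n:ℝ) * ⟪w σ, g σ⟫ := by positivity
        show -(2 * (n:ℝ)) * ⟪w σ, g σ⟫ ≤ 0
        linarith
    have hφle : ∀ τ ∈ Icc u v, φ τ ≤ φ u := by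
      intro τ hτ
      rcases eq_or_lt_of_le hτ.2 with he | hlt2
      · have hclos : v ∈ closure (Ico u v) := by
          rw [closure_Ico huv.ne]; exact ⟨huv.le, le_refl v⟩
        haveI : (nhdsWithin v (Ico u v)).NeBot := mem_closure_iff_nhdsWithin_neBot.mp hclos
        have hcv : ContinuousWithinAt φ (Ico u v) v :=
          (hφcont v ⟨huv.le, le_refl v⟩).mono Ico_subset_Icc_self
        rw [he]
        exact le_of_tendsto hcv (Filter.mem_of_superset self_mem_nhdsWithin
          fun σ hσ => hA σ hσ)
      · exact hA τ ⟨hτ.1, hlt2⟩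
    have hwu : w u = x u - a := by rw [hwx u hu0]; simp
    have ht0' : 0 ≤ t := le_trans hu0 ht.1
    have h4 : ‖w t‖ ≤ ‖x u - a‖ := by
      have h5 := hφle t ht
      have e : ∀ τ : ℝ, φ τ = ‖w τ‖ ^ 2 := fun τ => real_inner_self_eq_norm_sq _
      rw [e, e, hwu] at h5
      nlinarith [norm_nonneg (w t), norm_nonneg (x u - a)]
    have h6 : ‖y u - y t‖ ≤ ‖y u - a‖ + ‖y t - a‖ := by
      have he2 : y u - y t = (y u - a) - (y t - a) := by abel
      rw [he2]; exact norm_sub_le _ _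
    have h7 : ‖x t - a‖ ≤ ‖w t‖ + ‖y u - y t‖ := by
      have he3 : x t - a = w t - (y u - y t) := by rw [hwx t ht0']; abel
      rw [he3]; exact norm_sub_le _ _
    have h8 := hRy u (hs_mem k hk.le)
    have h9 := hRy t ⟨ht0', le_trans ht.2 hvq⟩
    linarith
  -- initial condition
  have hx0 : x 0 = y 0 := by
    have h := hxF 0 le_rfl
    rw [hF_def] at h
    simpa [intervalIntegral.integral_same] using h
  -- induction along the subdivision
  have hind : ∀ k ≤ r, ‖x (s k) - a‖ ≤ (2 * (k:ℝ) + 1) * R := by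
    intro k
    induction k with
    | zero =>
      intro _
      rw [hs0, hx0]
      have := hRy 0 ⟨le_refl 0, hq.le⟩
      push_cast
      linarith
    | succ k ih =>
      intro hk1
      have hk : k < r := hk1
      have h5 := hstepkey k hk (s (k + 1)) ⟨(hlt k hk).le, le_refl _⟩
      have h6 := ih hk.le
      push_cast
      push_cast at h6
      linarith
  -- the subdivision has at most ⌊q/δ⌋ + 1 intervals
  have hgrow : ∀ k < r, (k:ℝ) * δ ≤ s k := by
    intro k
    induction k with
    | zero => intro _; simp [hs0]
    | succ k ih =>
      intro hk
      have h8 := hstep k hk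
      have h9 := ih (by omega)
      push_cast
      linarith
  have hrb : (r:ℝ) ≤ (⌊q / δ⌋₊ : ℝ) + 1 := by
    have h7 : ((r - 1 : ℕ):ℝ) * δ ≤ q := by
      have h7a := hgrow (r - 1) (by omega)
      have h7b := (hs_mem (r - 1) (by omega)).2
      linarith
    have h10 : (r - 1 : ℕ) ≤ ⌊q / δ⌋₊ := Nat.le_floor (by rw [le_div_iff₀ hδ]; exact h7)
    have h11 : r ≤ ⌊q / δ⌋₊ + 1 := by omega
    exact_mod_cast h11
  -- conclusion
  intro t ht
  have hmain : ‖x t - a‖ ≤ (2 * (r:ℝ) + 1) * R := by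
    rcases eq_or_lt_of_le ht.2 with he | hltq
    · have hr1 : r - 1 < r := by omega
      have hsucc : r - 1 + 1 = r := by omega
      have hmem : t ∈ Set.Icc (s (r - 1)) (s (r - 1 + 1)) := by
        rw [hsucc, hsr, he]
        exact ⟨by rw [← hsr]; exact hmono' r le_rfl (r - 1) (by omega), le_refl q⟩
      have h12 := hstepkey (r - 1) hr1 t hmem
      have h13 := hind (r - 1) (by omega)
      have hc : ((r - 1 : ℕ):ℝ) = (r:ℝ) - 1 := by
        rw [Nat.cast_sub hr]; norm_num
      rw [hc] at h13
      linarith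
    · obtain ⟨k, hk, hk1, hk2⟩ := hfind t ht.1 hltq
      have h12 := hstepkey k hk t ⟨hk1, hk2.le⟩
      have h13 := hind k hk.le
      have hc : (k:ℝ) + 1 ≤ (r:ℝ) := by exact_mod_cast hk
      have h14 : (2 * (k:ℝ) + 3) * R ≤ (2 * (r:ℝ) + 1) * R :=
        mul_le_mul_of_nonneg_right (by linarith) hR0
      linarith
  have hsqrt : (5:ℝ) / 2 ≤ Real.sqrt 7 := by
    rw [show (5:ℝ) / 2 = Real.sqrt ((5 / 2) ^ 2) from (Real.sqrt_sq (by norm_num)).symm]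
    exact Real.sqrt_le_sqrt (by norm_num)
  have hN1 : (1:ℝ) ≤ (⌊q / δ⌋₊ : ℝ) + 1 := by
    have := Nat.cast_nonneg (α := ℝ) ⌊q / δ⌋₊
    linarith
  have hcoef : 2 * (r:ℝ) + 1 ≤ 2 * Real.sqrt 7 * ((⌊q / δ⌋₊ : ℝ) + 1) := by
    nlinarith
  calc ‖x t - a‖ ≤ (2 * (r:ℝ) + 1) * R := hmain
    _ ≤ 2 * Real.sqrt 7 * ((⌊q / δ⌋₊ : ℝ) + 1) * R :=
        mul_le_mul_of_nonneg_right hcoef hR0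
end

section
/- Under the assumptions of the penalization estimate (D ⊆ ℝ^d open convex, a ∈ D, d_a = dist(a, ∂D), y càdlàg with y(0) ∈ closure D, x^n solving the penalized equation x^n = y + k^n with k^n_t = -n∫_0^t (x^n_s - Π(x^n_s)) ds, and ω'_y(δ, q) < d_a/2), the total variation of k^n on [0,q] satisfies |k^n|_q ≤ 55 (⌊q/δ⌋ + 1)^3 d_a^{-1} sup_{t ≤ q} |y_t - a|². -/
open scoped RealInnerProductSpace
open MeasureTheory Set Filter intervalIntegral

variable {E : Type*} [NormedAddCommGroup E] [InnerProductSpace ℝ E] [CompleteSpace E]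

lemma two_integral_inner_primitive {ψ : ℝ → E} {u v : ℝ} (huv : u ≤ v)
    (hψ : IntegrableOn ψ (Ioc u v) volume) :
    2 * ∫ s in Set.Ioc u v, ⟪∫ r in u..s, ψ r, ψ s⟫ =
      ‖∫ r in Set.Ioc u v, ψ r‖ ^ 2 := by
  set μ := volume.restrict (Set.Ioc u v) with hμ
  have hψμ : Integrable ψ μ := hψ
  set W : E := ∫ r in Set.Ioc u v, ψ r with hW
  set F : ℝ → E := fun s => ∫ r in u..s, ψ r with hF
  set C : ℝ := ∫ r in u..v, ‖ψ r‖ with hC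
  have hsub : ∀ {s : ℝ}, s ∈ Set.Icc u v → IntervalIntegrable ψ volume u s := by
    intro s hs
    rw [intervalIntegrable_iff_integrableOn_Ioc_of_le hs.1]
    exact hψ.mono_set (Set.Ioc_subset_Ioc le_rfl hs.2)
  have hIuv : IntervalIntegrable ψ volume u v := hsub ⟨huv, le_rfl⟩
  have hFnorm : ∀ {s : ℝ}, s ∈ Set.Icc u v → ‖F s‖ ≤ C := by
    intro s hs
    refine (intervalIntegral.norm_integral_le_integral_norm hs.1).trans ?_
    have h1 : IntervalIntegrable (fun r => ‖ψ r‖) volume u s := (hsub hs).norm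
    have h2 : IntervalIntegrable (fun r => ‖ψ r‖) volume u v := hIuv.norm
    have h3 : (0:ℝ) ≤ ∫ r in s..v, ‖ψ r‖ :=
      intervalIntegral.integral_nonneg hs.2 (fun r _ => norm_nonneg _)
    have h4 := intervalIntegral.integral_interval_sub_left h2 h1
    linarith [h4]
  have hFcont : ContinuousOn F (Set.Icc u v) := by
    have := intervalIntegral.continuousOn_primitive_interval (a := u) (b := v) (μ := volume)
      (f := ψ) (by rwa [Set.uIcc_of_le huv, integrableOn_Icc_iff_integrableOn_Ioc])
    rwa [Set.uIcc_of_le huv] at this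
  have hFm : AEStronglyMeasurable F μ := by
    have h1 : AEStronglyMeasurable F (volume.restrict (Set.Icc u v)) :=
      hFcont.aestronglyMeasurable measurableSet_Icc
    exact h1.mono_measure (Measure.restrict_mono Set.Ioc_subset_Icc_self le_rfl)
  have hG1 : Integrable (fun s => ⟪F s, ψ s⟫) μ := by
    refine Integrable.mono' (hψμ.norm.const_mul C) (hFm.inner hψμ.1) ?_
    rw [hμ, ae_restrict_iff' measurableSet_Ioc]
    filter_upwards with s hs
    calc ‖⟪F s, ψ s⟫‖ ≤ ‖F s‖ * ‖ψ s‖ := by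
          rw [Real.norm_eq_abs]; exact abs_real_inner_le_norm _ _
      _ ≤ C * ‖ψ s‖ := by
          have := hFnorm (Set.mem_Icc_of_Ioc hs)
          exact mul_le_mul_of_nonneg_right this (norm_nonneg _)
  -- the kernel
  set H : ℝ × ℝ → ℝ := fun p => if p.1 ≤ p.2 then ⟪ψ p.1, ψ p.2⟫ else 0 with hHdef
  have hH : Integrable H (μ.prod μ) := by
    have h1 : AEStronglyMeasurable (fun p : ℝ × ℝ => ⟪ψ p.1, ψ p.2⟫) (μ.prod μ) :=
      AEStronglyMeasurable.inner hψμ.1.comp_fst hψμ.1.comp_snd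
    have h2 : AEStronglyMeasurable H (μ.prod μ) := by
      have : H = Set.indicator {p : ℝ × ℝ | p.1 ≤ p.2}
          (fun p => ⟪ψ p.1, ψ p.2⟫) := by
        ext p
        by_cases h : p.1 ≤ p.2 <;> simp [hHdef, h, Set.indicator_apply]
      rw [this]
      exact h1.indicator (measurableSet_le measurable_fst measurable_snd)
    refine Integrable.mono' (Integrable.mul_prod hψμ.norm hψμ.norm) h2 ?_
    filter_upwards with p
    by_cases h : p.1 ≤ p.2
    · simp only [hHdef, if_pos h, Real.norm_eq_abs]
      exact abs_real_inner_le_norm _ _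
    · simp only [hHdef, if_neg h, norm_zero]
      positivity
  have swap := MeasureTheory.integral_integral_swap (μ := μ) (ν := μ)
    (f := fun r s => H (r, s)) hH
  -- identify LHS
  have key1 : ∀ s ∈ Set.Ioc u v, (∫ r, H (r, s) ∂μ) = ⟪F s, ψ s⟫ := by
    intro s hs
    have h0 : ∀ r, H (r, s) = ⟪ψ s, (Set.Iic s).indicator ψ r⟫ := by
      intro r
      by_cases h : r ≤ s <;>
        simp [hHdef, h, Set.indicator_apply, real_inner_comm]
    calc (∫ r, H (r, s) ∂μ) = ∫ r, ⟪ψ s, (Set.Iic s).indicator ψ r⟫ ∂μ := by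
          simp only [h0]
      _ = ⟪ψ s, ∫ r, (Set.Iic s).indicator ψ r ∂μ⟫ := by
          exact integral_inner (hψμ.indicator measurableSet_Iic) _
      _ = ⟪F s, ψ s⟫ := by
          rw [real_inner_comm]
          congr 1
          rw [hμ, MeasureTheory.integral_indicator measurableSet_Iic,
            Measure.restrict_restrict measurableSet_Iic]
          have : Set.Iic s ∩ Set.Ioc u v = Set.Ioc u s := by
            ext r
            simp only [Set.mem_inter_iff, Set.mem_Iic, Set.mem_Ioc]
            exact ⟨fun h => ⟨h.2.1, h.1⟩, fun h => ⟨h.2, h.1, h.2.trans hs.2⟩⟩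
          rw [this]
          exact (intervalIntegral.integral_of_le hs.1.le).symm
  have key2 : ∀ r ∈ Set.Ioc u v, (∫ s, H (r, s) ∂μ) = ⟪ψ r, W⟫ - ⟪F r, ψ r⟫ := by
    intro r hr
    have h0 : ∀ s, H (r, s) = ⟪ψ r, (Set.Ici r).indicator ψ s⟫ := by
      intro s
      by_cases h : r ≤ s <;>
        simp [hHdef, h, Set.indicator_apply]
    calc (∫ s, H (r, s) ∂μ) = ∫ s, ⟪ψ r, (Set.Ici r).indicator ψ s⟫ ∂μ := by
          simp only [h0]
      _ = ⟪ψ r, ∫ s, (Set.Ici r).indicator ψ s ∂μ⟫ :=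
          integral_inner (hψμ.indicator measurableSet_Ici) _
      _ = ⟪ψ r, W⟫ - ⟪F r, ψ r⟫ := by
          rw [hμ, MeasureTheory.integral_indicator measurableSet_Ici,
            Measure.restrict_restrict measurableSet_Ici]
          have h1 : Set.Ici r ∩ Set.Ioc u v = Set.Icc r v := by
            ext s
            simp only [Set.mem_inter_iff, Set.mem_Ici, Set.mem_Icc, Set.mem_Ioc]
            exact ⟨fun h => ⟨h.1, h.2.2⟩, fun h => ⟨h.1, hr.1.trans_le h.1, h.2⟩⟩
          rw [h1, MeasureTheory.integral_Icc_eq_integral_Ioc]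
          have h2 : (∫ s in Set.Ioc r v, ψ s) = W - F r := by
            have h3 := intervalIntegral.integral_interval_sub_left hIuv
              (hsub ⟨hr.1.le, hr.2⟩)
            simp only [hF, hW]
            rw [← intervalIntegral.integral_of_le hr.2,
              ← intervalIntegral.integral_of_le huv]
            exact h3.symm
          rw [h2, inner_sub_right, real_inner_comm (F r) (ψ r)]
  -- put things together
  have hμT : (∫ s in Set.Ioc u v, ⟪F s, ψ s⟫) = ∫ s, ⟪F s, ψ s⟫ ∂μ := rfl
  set T : ℝ := ∫ s, ⟪F s, ψ s⟫ ∂μ with hT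
  have e1 : (∫ s, (∫ r, H (r, s) ∂μ) ∂μ) = T := by
    rw [hT, hμ]
    exact MeasureTheory.setIntegral_congr_fun measurableSet_Ioc key1
  have hWint : Integrable (fun r => ⟪ψ r, W⟫) μ := hψμ.inner_const W
  have e2 : (∫ r, (∫ s, H (r, s) ∂μ) ∂μ) = ‖W‖ ^ 2 - T := by
    rw [hμ]
    rw [MeasureTheory.setIntegral_congr_fun measurableSet_Ioc key2]
    rw [← hμ, integral_sub hWint hG1, ← hT]
    congr 1
    have hc : ∀ r, ⟪ψ r, W⟫ = ⟪W, ψ r⟫ := fun r => real_inner_comm _ _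
    simp only [hc]
    rw [integral_inner hψμ W, real_inner_self_eq_norm_sq]
  have hfin : T = ‖W‖ ^ 2 - T := by rw [← e2, ← e1]; exact swap.symm
  linarith

lemma norm_sq_primitive {ψ : ℝ → E} {u v : ℝ} (huv : u ≤ v)
    (hψ : IntervalIntegrable ψ volume u v) (z0 : E) :
    ‖z0 + ∫ s in u..v, ψ s‖ ^ 2 =
      ‖z0‖ ^ 2 + 2 * ∫ s in u..v, ⟪z0 + ∫ r in u..s, ψ r, ψ s⟫ := by
  have hψ' : IntegrableOn ψ (Set.Ioc u v) volume := by
    rwa [intervalIntegrable_iff_integrableOn_Ioc_of_le huv] at hψ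
  set μ := volume.restrict (Set.Ioc u v) with hμ
  have hψμ : Integrable ψ μ := hψ'
  set F : ℝ → E := fun s => ∫ r in u..s, ψ r with hF
  have hsub : ∀ {s : ℝ}, s ∈ Set.Icc u v → IntervalIntegrable ψ volume u s := by
    intro s hs
    rw [intervalIntegrable_iff_integrableOn_Ioc_of_le hs.1]
    exact hψ'.mono_set (Set.Ioc_subset_Ioc le_rfl hs.2)
  set C : ℝ := ∫ r in u..v, ‖ψ r‖ with hC
  have hFnorm : ∀ {s : ℝ}, s ∈ Set.Icc u v → ‖F s‖ ≤ C := by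
    intro s hs
    refine (intervalIntegral.norm_integral_le_integral_norm hs.1).trans ?_
    have h1 : IntervalIntegrable (fun r => ‖ψ r‖) volume u s := (hsub hs).norm
    have h2 : IntervalIntegrable (fun r => ‖ψ r‖) volume u v := hψ.norm
    have h3 : (0:ℝ) ≤ ∫ r in s..v, ‖ψ r‖ :=
      intervalIntegral.integral_nonneg hs.2 (fun r _ => norm_nonneg _)
    have h4 := intervalIntegral.integral_interval_sub_left h2 h1
    linarith [h4]
  have hFcont : ContinuousOn F (Set.Icc u v) := by
    have := intervalIntegral.continuousOn_primitive_interval (a := u) (b := v) (μ := volume)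
      (f := ψ) (by rwa [Set.uIcc_of_le huv, integrableOn_Icc_iff_integrableOn_Ioc])
    rwa [Set.uIcc_of_le huv] at this
  have hFm : AEStronglyMeasurable F μ := by
    have h1 : AEStronglyMeasurable F (volume.restrict (Set.Icc u v)) :=
      hFcont.aestronglyMeasurable measurableSet_Icc
    exact h1.mono_measure (Measure.restrict_mono Set.Ioc_subset_Icc_self le_rfl)
  have hG1 : Integrable (fun s => ⟪F s, ψ s⟫) μ := by
    refine Integrable.mono' (hψμ.norm.const_mul C) (hFm.inner hψμ.1) ?_
    rw [hμ, ae_restrict_iff' measurableSet_Ioc]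
    filter_upwards with s hs
    calc ‖⟪F s, ψ s⟫‖ ≤ ‖F s‖ * ‖ψ s‖ := by
          rw [Real.norm_eq_abs]; exact abs_real_inner_le_norm _ _
      _ ≤ C * ‖ψ s‖ := mul_le_mul_of_nonneg_right (hFnorm (Set.mem_Icc_of_Ioc hs))
          (norm_nonneg _)
  have hG0 : Integrable (fun s => ⟪z0, ψ s⟫) μ := hψμ.const_inner z0
  have split : (∫ s in u..v, ⟪z0 + F s, ψ s⟫) =
      (∫ s, ⟪z0, ψ s⟫ ∂μ) + ∫ s, ⟪F s, ψ s⟫ ∂μ := by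
    rw [intervalIntegral.integral_of_le huv, ← integral_add hG0 hG1]
    refine MeasureTheory.setIntegral_congr_fun measurableSet_Ioc ?_
    intro s _
    exact inner_add_left _ _ _
  have h0 : (∫ s, ⟪z0, ψ s⟫ ∂μ) = ⟪z0, ∫ s in Set.Ioc u v, ψ s⟫ := integral_inner hψμ z0
  have htwo := two_integral_inner_primitive huv hψ'
  have hWeq : (∫ s in u..v, ψ s) = ∫ s in Set.Ioc u v, ψ s :=
    intervalIntegral.integral_of_le huv
  rw [hWeq, norm_add_sq_real, split, h0]
  have hTT : (∫ s, ⟪F s, ψ s⟫ ∂μ) = ∫ s in Set.Ioc u v, ⟪F s, ψ s⟫ := rfl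
  rw [hTT]
  linarith

lemma integrable_inner_primitive {ψ : ℝ → E} {u v : ℝ} (huv : u ≤ v)
    (hψ : IntervalIntegrable ψ volume u v) (z0 : E) :
    IntegrableOn (fun s => ⟪z0 + ∫ r in u..s, ψ r, ψ s⟫) (Set.Ioc u v) volume := by
  have hψ' : IntegrableOn ψ (Set.Ioc u v) volume := by
    rwa [intervalIntegrable_iff_integrableOn_Ioc_of_le huv] at hψ
  set μ := volume.restrict (Set.Ioc u v) with hμ
  have hψμ : Integrable ψ μ := hψ'
  set F : ℝ → E := fun s => ∫ r in u..s, ψ r with hF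
  have hsub : ∀ {s : ℝ}, s ∈ Set.Icc u v → IntervalIntegrable ψ volume u s := by
    intro s hs
    rw [intervalIntegrable_iff_integrableOn_Ioc_of_le hs.1]
    exact hψ'.mono_set (Set.Ioc_subset_Ioc le_rfl hs.2)
  set C : ℝ := ∫ r in u..v, ‖ψ r‖ with hC
  have hFnorm : ∀ {s : ℝ}, s ∈ Set.Icc u v → ‖F s‖ ≤ C := by
    intro s hs
    refine (intervalIntegral.norm_integral_le_integral_norm hs.1).trans ?_
    have h1 : IntervalIntegrable (fun r => ‖ψ r‖) volume u s := (hsub hs).norm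
    have h2 : IntervalIntegrable (fun r => ‖ψ r‖) volume u v := hψ.norm
    have h3 : (0:ℝ) ≤ ∫ r in s..v, ‖ψ r‖ :=
      intervalIntegral.integral_nonneg hs.2 (fun r _ => norm_nonneg _)
    have h4 := intervalIntegral.integral_interval_sub_left h2 h1
    linarith [h4]
  have hFcont : ContinuousOn F (Set.Icc u v) := by
    have := intervalIntegral.continuousOn_primitive_interval (a := u) (b := v) (μ := volume)
      (f := ψ) (by rwa [Set.uIcc_of_le huv, integrableOn_Icc_iff_integrableOn_Ioc])
    rwa [Set.uIcc_of_le huv] at this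
  have hFm : AEStronglyMeasurable F μ := by
    have h1 : AEStronglyMeasurable F (volume.restrict (Set.Icc u v)) :=
      hFcont.aestronglyMeasurable measurableSet_Icc
    exact h1.mono_measure (Measure.restrict_mono Set.Ioc_subset_Icc_self le_rfl)
  refine Integrable.mono' (hψμ.norm.const_mul (‖z0‖ + C))
    ((aestronglyMeasurable_const.add hFm).inner hψμ.1) ?_
  rw [ae_restrict_iff' measurableSet_Ioc]
  filter_upwards with s hs
  calc ‖⟪z0 + F s, ψ s⟫‖ ≤ ‖z0 + F s‖ * ‖ψ s‖ := by
        rw [Real.norm_eq_abs]; exact abs_real_inner_le_norm _ _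
    _ ≤ (‖z0‖ + C) * ‖ψ s‖ := by
        refine mul_le_mul_of_nonneg_right ?_ (norm_nonneg _)
        exact (norm_add_le _ _).trans (by
          have := hFnorm (Set.mem_Icc_of_Ioc hs); linarith)

lemma proj_inner_ge {C : Set E} (hC : Convex ℝ C) {proj : E → E}
    (hproj : ∀ z, proj z ∈ C ∧ ∀ w ∈ C, dist z (proj z) ≤ dist z w)
    {a : E} {da : ℝ} (hda : 0 ≤ da) (hball : Metric.closedBall a da ⊆ C) (x : E) :
    da * ‖x - proj x‖ ≤ ⟪x - proj x, x - a⟫ := by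
  obtain ⟨hmem, hmin⟩ := hproj x
  by_cases hv : x - proj x = 0
  · rw [hv]; simp
  haveI : Nonempty ↑C := ⟨⟨proj x, hmem⟩⟩
  have hVI : ∀ w ∈ C, ⟪x - proj x, w - proj x⟫ ≤ 0 := by
    rw [← norm_eq_iInf_iff_real_inner_le_zero hC hmem]
    have hle1 : ‖x - proj x‖ ≤ ⨅ w : C, ‖x - ↑w‖ := le_ciInf fun w => by
      rw [← dist_eq_norm, ← dist_eq_norm]; exact hmin w w.2
    have hbdd : BddBelow (Set.range fun w : C => ‖x - ↑w‖) := by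
      refine ⟨0, ?_⟩
      rintro r ⟨w, rfl⟩
      exact norm_nonneg _
    have hle2 : (⨅ w : C, ‖x - ↑w‖) ≤ ‖x - proj x‖ := ciInf_le hbdd ⟨proj x, hmem⟩
    exact le_antisymm hle1 hle2
  set p := proj x with hp
  set nv := ‖x - p‖ with hnv
  have hnvpos : 0 < nv := by
    rw [hnv]
    exact norm_pos_iff.2 hv
  set uvec : E := nv⁻¹ • (x - p) with huvec
  set w : E := a + da • uvec with hwdef
  have hw : w ∈ C := by
    apply hball
    rw [Metric.mem_closedBall, dist_eq_norm]
    have : w - a = da • uvec := by rw [hwdef]; abel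
    rw [this, norm_smul, huvec, norm_smul]
    simp only [Real.norm_eq_abs, abs_of_nonneg hda, abs_of_pos (inv_pos.2 hnvpos)]
    rw [← hnv, inv_mul_cancel₀ hnvpos.ne']
    simpa using hda
  have h1 := hVI w hw
  have hww : w - p = da • uvec + ((x - p) - (x - a)) := by
    rw [hwdef]; abel
  rw [hww, inner_add_right, inner_sub_right, huvec, real_inner_smul_right,
    real_inner_smul_right, real_inner_self_eq_norm_sq, ← hnv] at h1
  have hsq : nv⁻¹ * nv ^ 2 = nv := by
    rw [sq, ← mul_assoc, inv_mul_cancel₀ hnvpos.ne', one_mul]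
  nlinarith [sq_nonneg nv]

lemma key_interval {C : Set E} (hC : Convex ℝ C) {proj : E → E}
    (hproj : ∀ z, proj z ∈ C ∧ ∀ w ∈ C, dist z (proj z) ≤ dist z w)
    {a : E} {da : ℝ} (hda : 0 < da) (hball : Metric.closedBall a da ⊆ C)
    (y x : ℝ → E) (n : ℝ) (hn : 0 ≤ n)
    (hint : ∀ t : ℝ, 0 ≤ t → IntervalIntegrable (fun s => x s - proj (x s)) volume 0 t)
    (heq : ∀ t : ℝ, 0 ≤ t → x t = y t - n • ∫ s in (0:ℝ)..t, (x s - proj (x s)))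
    {u v : ℝ} (hu : 0 ≤ u) (huv : u < v)
    (hosc : ∀ s ∈ Set.Ico u v, ‖y s - y u‖ < da / 2) :
    n * da * (∫ s in u..v, ‖x s - proj (x s)‖) ≤ ‖x u - a‖ ^ 2 ∧
    ‖x v - a‖ ≤ ‖x u - a‖ + ‖y v - y u‖ := by
  set g : ℝ → E := fun s => x s - proj (x s) with hg
  set ψ : ℝ → E := fun s => -(n • g s) with hψdef
  have hguv : ∀ {s t : ℝ}, 0 ≤ s → s ≤ t → IntervalIntegrable g volume s t := by
    intro s t hs hst
    exact (hint t (hs.trans hst)).mono_set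
      (by rw [Set.uIcc_of_le hst, Set.uIcc_of_le (hs.trans hst)]
          exact Set.Icc_subset_Icc hs le_rfl)
  have hψint : IntervalIntegrable ψ volume u v := ((hguv hu huv.le).smul n).neg
  have hψsub : ∀ {t : ℝ}, u ≤ t → t ≤ v → IntervalIntegrable ψ volume u t := by
    intro t h1 h2
    exact ((hguv hu h1).smul n).neg
  have hxz : ∀ t, u ≤ t → x t - (x u + ∫ s in u..t, ψ s) = y t - y u := by
    intro t ht
    have h1 := heq t (hu.trans ht)
    have h2 := heq u hu
    have h3 : (∫ s in (0:ℝ)..t, g s) - (∫ s in (0:ℝ)..u, g s) = ∫ s in u..t, g s :=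
      intervalIntegral.integral_interval_sub_left (hint t (hu.trans ht)) (hint u hu)
    have h4 : (∫ s in u..t, ψ s) = -(n • ∫ s in u..t, g s) := by
      rw [hψdef]
      rw [intervalIntegral.integral_neg, intervalIntegral.integral_smul]
    rw [h1, h2, h4, ← h3]
    rw [smul_sub]
    abel
  have hid := norm_sq_primitive huv.le hψint (x u - a)
  have hptwise : ∀ s ∈ Set.Ioo u v,
      ⟪x u - a + ∫ r in u..s, ψ r, ψ s⟫ ≤ -(n * da / 2) * ‖g s‖ := by
    intro s hs
    have h := hxz s hs.1.le
    have hz : x u - a + (∫ r in u..s, ψ r) = (x s - a) - (y s - y u) := by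
      rw [← h]
      abel
    have hinner1 : da * ‖g s‖ ≤ ⟪x s - a, g s⟫ := by
      rw [real_inner_comm]
      exact proj_inner_ge hC hproj hda.le hball (x s)
    have hinner2 : ⟪y s - y u, g s⟫ ≤ da / 2 * ‖g s‖ := by
      have := real_inner_le_norm (y s - y u) (g s)
      have h6 := hosc s (Set.mem_Ico_of_Ioo hs)
      nlinarith [norm_nonneg (g s)]
    have e : ⟪(x s - a) - (y s - y u), ψ s⟫
        = n * ⟪y s - y u, g s⟫ - n * ⟪x s - a, g s⟫ := by
      simp only [hψdef, inner_neg_right, real_inner_smul_right]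
      rw [inner_sub_left (𝕜 := ℝ) (x s - a) (y s - y u) (g s)]
      ring
    rw [hz, e]
    have m1 := mul_le_mul_of_nonneg_left hinner2 hn
    have m2 := mul_le_mul_of_nonneg_left hinner1 hn
    nlinarith [norm_nonneg (g s)]
  have hIL : IntegrableOn (fun s => ⟪x u - a + ∫ r in u..s, ψ r, ψ s⟫) (Set.Ioo u v) volume :=
    (integrable_inner_primitive huv.le hψint (x u - a)).mono_set Set.Ioo_subset_Ioc_self
  have hIR : IntegrableOn (fun s => -(n * da / 2) * ‖g s‖) (Set.Ioo u v) volume := by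
    have : IntervalIntegrable (fun s => -(n * da / 2) * ‖g s‖) volume u v :=
      ((hguv hu huv.le).norm.const_mul _)
    rw [intervalIntegrable_iff_integrableOn_Ioc_of_le huv.le] at this
    exact this.mono_set Set.Ioo_subset_Ioc_self
  have hmono : (∫ s in u..v, ⟪x u - a + ∫ r in u..s, ψ r, ψ s⟫) ≤
      ∫ s in u..v, -(n * da / 2) * ‖g s‖ := by
    rw [intervalIntegral.integral_of_le huv.le, intervalIntegral.integral_of_le huv.le,
      MeasureTheory.integral_Ioc_eq_integral_Ioo, MeasureTheory.integral_Ioc_eq_integral_Ioo]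
    exact MeasureTheory.setIntegral_mono_on hIL hIR measurableSet_Ioo hptwise
  have hconst : (∫ s in u..v, -(n * da / 2) * ‖g s‖) =
      -(n * da / 2) * ∫ s in u..v, ‖g s‖ := intervalIntegral.integral_const_mul _ _
  have hZ2 : ‖x u - a + ∫ s in u..v, ψ s‖ ^ 2 ≤
      ‖x u - a‖ ^ 2 - n * da * ∫ s in u..v, ‖g s‖ := by
    rw [hid]
    have : (∫ s in u..v, ⟪x u - a + ∫ r in u..s, ψ r, ψ s⟫) ≤ -(n * da / 2) * ∫ s in u..v, ‖g s‖ := by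
      rw [← hconst]; exact hmono
    linarith
  have hZnn : (0:ℝ) ≤ ‖x u - a + ∫ s in u..v, ψ s‖ ^ 2 := sq_nonneg _
  constructor
  · linarith
  · have hgnn : (0:ℝ) ≤ ∫ s in u..v, ‖g s‖ :=
      intervalIntegral.integral_nonneg huv.le (fun r _ => norm_nonneg _)
    have hZ2' : ‖x u - a + ∫ s in u..v, ψ s‖ ^ 2 ≤ ‖x u - a‖ ^ 2 := by
      nlinarith [mul_nonneg (mul_nonneg hn hda.le) hgnn]
    have hZle : ‖x u - a + ∫ s in u..v, ψ s‖ ≤ ‖x u - a‖ := by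
      nlinarith [norm_nonneg (x u - a + ∫ s in u..v, ψ s), norm_nonneg (x u - a)]
    have hxv : x v - a = (x u - a + ∫ s in u..v, ψ s) + (y v - y u) := by
      have := hxz v huv.le
      rw [sub_eq_iff_eq_add'] at this
      rw [this]
      abel
    calc ‖x v - a‖ = ‖(x u - a + ∫ s in u..v, ψ s) + (y v - y u)‖ := by rw [← hxv]
      _ ≤ ‖x u - a + ∫ s in u..v, ψ s‖ + ‖y v - y u‖ := norm_add_le _ _
      _ ≤ ‖x u - a‖ + ‖y v - y u‖ := by linarith

variable {d : ℕ}

/-- Lemma 2.2(ii): variation bound for the penalization term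
`k^n_t = -n ∫_0^t (x s - Π(x s)) ds`, whose total variation on `[0, q]` equals
`n ∫_0^q ‖x s - Π(x s)‖ ds`. -/
theorem stmt5 (d : ℕ) (D : Set (EuclideanSpace ℝ (Fin d)))
    (hD : IsOpen D) (hconv : Convex ℝ D) (hne : D.Nonempty)
    (a : EuclideanSpace ℝ (Fin d)) (ha : a ∈ D)
    (proj : EuclideanSpace ℝ (Fin d) → EuclideanSpace ℝ (Fin d))
    (hproj : IsProjOn (closure D) proj)
    (y : ℝ → EuclideanSpace ℝ (Fin d)) (hy : Cadlag y) (hy0 : y 0 ∈ closure D)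
    (n : ℕ) (x k : ℝ → EuclideanSpace ℝ (Fin d))
    (hx : PenalizedSol proj (n : ℝ) y x)
    (hk : ∀ t : ℝ, 0 ≤ t → k t = -((n : ℝ) • ∫ s in (0:ℝ)..t, (x s - proj (x s))))
    (q δ : ℝ) (hq : 0 < q) (hδ : 0 < δ)
    (hω : OmegaPrimeLt y δ q (Metric.infDist a (frontier D) / 2)) :
    (n : ℝ) * ∫ s in (0:ℝ)..q, ‖x s - proj (x s)‖ ≤
      55 * (⌊q / δ⌋₊ + 1) ^ 3 * (Metric.infDist a (frontier D))⁻¹ *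
        (⨆ s : Set.Icc (0:ℝ) q, ‖y s - a‖) ^ 2 := by
  classical
  obtain ⟨hint, heq⟩ := hx
  obtain ⟨r, hr, σ, hσ0', hσr, hσlt, hstep, hosc⟩ := hω
  set da := Metric.infDist a (frontier D) with hda_def
  -- the frontier is nonempty
  have hfr : (frontier D).Nonempty := by
    by_contra hfe
    rw [Set.not_nonempty_iff_eq_empty] at hfe
    have h01 := hosc 0 hr (σ 0) ⟨le_rfl, hσlt 0 hr⟩ (σ 0) ⟨le_rfl, hσlt 0 hr⟩
    rw [hda_def, hfe, Metric.infDist_empty] at h01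
    simp at h01
  -- positivity of da
  have hdapos : 0 < da := by
    rw [hda_def]
    refine (IsClosed.notMem_iff_infDist_pos isClosed_frontier hfr).1 ?_
    rw [hD.frontier_eq]
    exact fun hmem => hmem.2 ha
  -- the closed ball of radius da is inside the closure of D
  have hfrsub : ∀ z ∈ Metric.ball a da, z ∉ frontier D := by
    intro z hz hzf
    have h1 : da ≤ dist a z := Metric.infDist_le_dist_of_mem hzf
    rw [Metric.mem_ball, dist_comm] at hz
    linarith
  have hsplit2 : Metric.ball a da ⊆ D ∪ (closure D)ᶜ := by
    intro z hz
    by_cases h : z ∈ closure D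
    · left
      have h2 : z ∈ interior D := by
        by_contra h2
        exact hfrsub z hz ⟨h, h2⟩
      rwa [hD.interior_eq] at h2
    · right; exact h
  have hballD : Metric.ball a da ⊆ D :=
    IsPreconnected.subset_left_of_subset_union hD isClosed_closure.isOpen_compl
      (disjoint_compl_right.mono_left subset_closure) hsplit2
      ⟨a, Metric.mem_ball_self hdapos, ha⟩ (convex_ball a da).isPreconnected
  have hball : Metric.closedBall a da ⊆ closure D := by
    rw [← closure_ball a hdapos.ne']
    exact closure_mono hballD
  -- the sup M
  set M := ⨆ s : Set.Icc (0:ℝ) q, ‖y s - a‖ with hM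
  have hrange0 : (0:ℕ) ∈ Finset.range (r + 1) := by simp
  set B := Finset.sup' (Finset.range (r + 1)) ⟨0, hrange0⟩ (fun k => ‖y (σ k) - a‖) with hBdef
  have hBk : ∀ i ≤ r, ‖y (σ i) - a‖ ≤ B := by
    intro i hi
    rw [hBdef]
    exact Finset.le_sup' (fun k => ‖y (σ k) - a‖) (Finset.mem_range.2 (Nat.lt_succ_of_le hi))
  have hB : ∀ τ ∈ Set.Icc (0:ℝ) q, ‖y τ - a‖ ≤ da / 2 + B := by
    intro τ hτ
    by_cases hq' : τ = q
    · subst hq'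
      rw [← hσr]
      have := hBk r le_rfl
      linarith
    have hτq : τ < q := lt_of_le_of_ne hτ.2 hq'
    set Kset := (Finset.range (r + 1)).filter (fun j => σ j ≤ τ) with hKset
    have hKne : Kset.Nonempty := ⟨0, by simp [hKset, hσ0', hτ.1]⟩
    set kk := Kset.max' hKne with hkk
    have hkmem : kk ∈ Kset := Kset.max'_mem hKne
    rw [hKset, Finset.mem_filter, Finset.mem_range] at hkmem
    have hkle : kk ≤ r := Nat.lt_succ_iff.1 hkmem.1
    have hkr : kk < r := by
      rcases lt_or_eq_of_le hkle with h | h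
      · exact h
      · exfalso
        have := hkmem.2
        rw [h, hσr] at this
        linarith
    have hk1 : τ < σ (kk + 1) := by
      by_contra h
      push_neg at h
      have hmem2 : kk + 1 ∈ Kset := by
        rw [hKset, Finset.mem_filter, Finset.mem_range]
        exact ⟨Nat.succ_lt_succ hkr, h⟩
      have := Finset.le_max' Kset (kk + 1) hmem2
      omega
    have hoscτ := hosc kk hkr τ ⟨hkmem.2, hk1⟩ (σ kk) ⟨le_rfl, hσlt kk hkr⟩
    calc ‖y τ - a‖ ≤ ‖y τ - y (σ kk)‖ + ‖y (σ kk) - a‖ := by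
          have : y τ - a = (y τ - y (σ kk)) + (y (σ kk) - a) := by abel
          rw [this]; exact norm_add_le _ _
      _ ≤ da / 2 + B := add_le_add hoscτ.le (hBk kk hkle)
  have hMbdd : BddAbove (Set.range fun τ : Set.Icc (0:ℝ) q => ‖y τ - a‖) := by
    refine ⟨da / 2 + B, ?_⟩
    rintro ρ ⟨τ, rfl⟩
    exact hB τ τ.2
  have hMle : ∀ τ ∈ Set.Icc (0:ℝ) q, ‖y τ - a‖ ≤ M := fun τ hτ =>
    le_ciSup hMbdd (⟨τ, hτ⟩ : Set.Icc (0:ℝ) q)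
  have hM0 : 0 ≤ M := le_trans (norm_nonneg _) (hMle 0 ⟨le_rfl, hq.le⟩)
  -- basic facts about subdivision
  have hσmono : ∀ i j, i ≤ j → j ≤ r → σ i ≤ σ j := by
    intro i j hij hjr
    induction j with
    | zero => interval_cases i; exact le_rfl
    | succ j ih =>
      rcases Nat.lt_succ_iff_lt_or_eq.1 (Nat.lt_succ_of_le hij) with h | h
      · exact le_trans (ih (Nat.lt_succ_iff.1 h) (le_of_lt (Nat.lt_of_lt_of_le (Nat.lt_succ_self j) hjr)))
          (hσlt j (Nat.lt_of_succ_le hjr)).le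
      · rw [h]
  have hσnn : ∀ i, i ≤ r → 0 ≤ σ i := by
    intro i hi
    rw [← hσ0']
    exact hσmono 0 i (Nat.zero_le _) hi
  have hσle : ∀ i, i ≤ r → σ i ≤ q := by
    intro i hi
    rw [← hσr]
    exact hσmono i r hi le_rfl
  -- inductive bound on ‖x (σ i) - a‖
  have hxσ : ∀ i, i ≤ r → ‖x (σ i) - a‖ ≤ (2 * (i:ℝ) + 1) * M := by
    intro i
    induction i with
    | zero =>
      intro _
      have hx0 : x 0 = y 0 := by
        have h := heq 0 le_rfl
        simpa using h
      rw [hσ0', hx0]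
      have := hMle 0 ⟨le_rfl, hq.le⟩
      push_cast
      linarith
    | succ i ih =>
      intro hir
      have hi : i < r := Nat.lt_of_succ_le hir
      have hkey := key_interval hconv.closure hproj hdapos hball y x (n:ℝ)
        (Nat.cast_nonneg n) hint heq (hσnn i hi.le) (hσlt i hi)
        (fun τ hτ => hosc i hi τ hτ (σ i) ⟨le_rfl, hσlt i hi⟩)
      have h2 := hkey.2
      have h3 : ‖y (σ (i+1)) - y (σ i)‖ ≤ 2 * M := by
        have ha1 := hMle (σ (i+1)) ⟨hσnn _ hir, hσle _ hir⟩
        have ha2 := hMle (σ i) ⟨hσnn _ hi.le, hσle _ hi.le⟩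
        calc ‖y (σ (i+1)) - y (σ i)‖ ≤ ‖y (σ (i+1)) - a‖ + ‖y (σ i) - a‖ := by
              have : y (σ (i+1)) - y (σ i) = (y (σ (i+1)) - a) - (y (σ i) - a) := by abel
              rw [this]; exact norm_sub_le _ _
          _ ≤ 2 * M := by linarith
      have h4 := ih hi.le
      push_cast
      push_cast at h4
      linarith
  -- per-interval integral bound
  have hper : ∀ i, i < r → (n:ℝ) * (∫ τ in σ i..σ (i+1), ‖x τ - proj (x τ)‖) ≤
      ((2 * (i:ℝ) + 1) * M) ^ 2 / da := by
    intro i hi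
    have hkey := key_interval hconv.closure hproj hdapos hball y x (n:ℝ)
      (Nat.cast_nonneg n) hint heq (hσnn i hi.le) (hσlt i hi)
      (fun τ hτ => hosc i hi τ hτ (σ i) ⟨le_rfl, hσlt i hi⟩)
    have h1 := hkey.1
    have hsq : ‖x (σ i) - a‖ ^ 2 ≤ ((2 * (i:ℝ) + 1) * M) ^ 2 :=
      pow_le_pow_left₀ (norm_nonneg _) (hxσ i hi.le) 2
    rw [le_div_iff₀ hdapos]
    nlinarith [h1, hsq]
  -- splitting the total integral
  have hintervals : ∀ i, i < r →
      IntervalIntegrable (fun τ => ‖x τ - proj (x τ)‖) volume (σ i) (σ (i+1)) := by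
    intro i hi
    refine ((hint q hq.le).mono_set ?_).norm
    rw [Set.uIcc_of_le (hσlt i hi).le, Set.uIcc_of_le hq.le]
    exact Set.Icc_subset_Icc (hσnn i hi.le) (hσle _ hi)
  have hsplit : (∫ τ in (0:ℝ)..q, ‖x τ - proj (x τ)‖) =
      ∑ i ∈ Finset.range r, ∫ τ in σ i..σ (i+1), ‖x τ - proj (x τ)‖ := by
    rw [intervalIntegral.sum_integral_adjacent_intervals hintervals, hσ0', hσr]
  -- each interval integral bound, summed
  have hsum : (n:ℝ) * ∫ τ in (0:ℝ)..q, ‖x τ - proj (x τ)‖ ≤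
      (r:ℝ) * ((2 * (r:ℝ)) * M) ^ 2 / da := by
    rw [hsplit, Finset.mul_sum]
    calc (∑ i ∈ Finset.range r, (n:ℝ) * ∫ τ in σ i..σ (i+1), ‖x τ - proj (x τ)‖)
        ≤ ∑ i ∈ Finset.range r, ((2 * (i:ℝ) + 1) * M) ^ 2 / da := by
          refine Finset.sum_le_sum ?_
          intro i hi
          exact hper i (Finset.mem_range.1 hi)
      _ ≤ ∑ i ∈ Finset.range r, ((2 * (r:ℝ)) * M) ^ 2 / da := by
          refine Finset.sum_le_sum ?_
          intro i hi
          have hic : (i:ℝ) ≤ (r:ℝ) - 1 := by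
            have := Finset.mem_range.1 hi
            have : (i:ℝ) + 1 ≤ (r:ℝ) := by exact_mod_cast this
            linarith
          refine (div_le_div_iff_of_pos_right hdapos).2 ?_
          have hb : (2 * (i:ℝ) + 1) * M ≤ (2 * (r:ℝ)) * M := by
            have : 2 * (i:ℝ) + 1 ≤ 2 * (r:ℝ) := by linarith
            exact mul_le_mul_of_nonneg_right this hM0
          refine pow_le_pow_left₀ ?_ hb 2
          positivity
      _ = (r:ℝ) * ((2 * (r:ℝ)) * M) ^ 2 / da := by
          rw [Finset.sum_const, Finset.card_range]
          ring
  -- r ≤ ⌊q/δ⌋ + 1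
  have hstepσ : ∀ m, m + 1 ≤ r → (m:ℝ) * δ ≤ σ m := by
    intro m
    induction m with
    | zero => intro _; rw [hσ0']; simp
    | succ m ih =>
      intro hm
      have h1 := ih (by omega)
      have h2 := hstep m (by omega)
      push_cast
      linarith
  have hrle : (r:ℝ) ≤ (⌊q / δ⌋₊ : ℝ) + 1 := by
    have hr1 : r - 1 + 1 ≤ r := by omega
    have h1 := hstepσ (r-1) hr1
    have h2 := hσle (r-1) (by omega)
    have h3 : ((r-1:ℕ):ℝ) * δ ≤ q := le_trans h1 h2
    have h4 : ((r-1:ℕ):ℝ) ≤ q / δ := by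
      rw [le_div_iff₀ hδ]
      exact h3
    have h5 : (r-1:ℕ) ≤ ⌊q / δ⌋₊ := by
      rw [Nat.le_floor_iff (by positivity)]
      exact h4
    have h6 : ((r-1:ℕ):ℝ) ≤ (⌊q / δ⌋₊ : ℝ) := by exact_mod_cast h5
    have h7 : ((r-1:ℕ):ℝ) = (r:ℝ) - 1 := by
      have : (1:ℕ) ≤ r := hr
      push_cast [this]
      ring
    linarith
  -- final combination
  have h00 : (0:ℝ) ≤ (⌊q / δ⌋₊ : ℝ) := Nat.cast_nonneg _
  have hN1 : (1:ℝ) ≤ (⌊q / δ⌋₊ : ℝ) + 1 := by linarith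
  have hrpos : (0:ℝ) < (r:ℝ) := by exact_mod_cast hr
  calc (n:ℝ) * ∫ τ in (0:ℝ)..q, ‖x τ - proj (x τ)‖
      ≤ (r:ℝ) * ((2 * (r:ℝ)) * M) ^ 2 / da := hsum
    _ = 4 * (r:ℝ)^3 * da⁻¹ * M^2 := by
        field_simp
        ring
    _ ≤ 55 * ((⌊q / δ⌋₊ : ℝ) + 1) ^ 3 * da⁻¹ * M ^ 2 := by
        have hr3 : (r:ℝ)^3 ≤ ((⌊q / δ⌋₊ : ℝ) + 1)^3 :=
          pow_le_pow_left₀ hrpos.le hrle 3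
        have hpos : (0:ℝ) ≤ da⁻¹ * M^2 := by positivity
        nlinarith [pow_nonneg (le_trans zero_le_one hN1) 3]
end

section
/- Let y^n, y be càdlàg functions [0,∞) → ℝ^d with y^n_0 ∈ closure D, and suppose y^n → y in the Skorokhod J₁ topology. Let x^n solve the penalized equation x^n_t = y^n_t - n∫_0^t (x^n_s - Π(x^n_s)) ds with penalization term k^n. Then for every q > 0: sup_{n} sup_{t ≤ q} |x^n_t| < ∞ and sup_n |k^n|_q < ∞, where |k^n|_q = n∫_0^q |x^n_s - Π(x^n_s)| ds. -/
open scoped RealInnerProductSpace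
open MeasureTheory Set Filter

variable {d : ℕ}

/-- Convergence in the Skorokhod `J₁` topology on `D([0,∞), F)`, via time changes. -/
def J1Tendsto {F : Type*} [NormedAddCommGroup F] (fn : ℕ → ℝ → F) (f : ℝ → F) : Prop :=
  ∃ lam : ℕ → ℝ → ℝ,
    (∀ n, StrictMono (lam n) ∧ Continuous (lam n) ∧ lam n 0 = 0 ∧
      Filter.Tendsto (lam n) Filter.atTop Filter.atTop) ∧
    ∀ q > (0:ℝ), ∀ ε > (0:ℝ), ∃ N : ℕ, ∀ n ≥ N, ∀ t ∈ Set.Icc (0:ℝ) q,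
      |lam n t - t| ≤ ε ∧ ‖fn n (lam n t) - f t‖ ≤ ε

/-- `(x, k)` solves the Skorokhod problem on the convex domain `D` associated with `y`:
`x = y + k`, `x` is `closure D`-valued, `k` is of locally bounded variation with `k 0 = 0`,
`dk = n d|k|` where `n` is an inward normal at `x` on the boundary, and `|k|` increases
only when `x ∈ ∂D`.  Here `v` plays the role of `|k|` and `nv` of the normal field. -/
def IsSkorokhodSol (D : Set (EuclideanSpace ℝ (Fin d)))
    (y x : ℝ → EuclideanSpace ℝ (Fin d)) : Prop :=
  ∃ (k : ℝ → EuclideanSpace ℝ (Fin d)) (v : StieltjesFunction ℝ)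
    (nv : ℝ → EuclideanSpace ℝ (Fin d)),
    (∀ t : ℝ, 0 ≤ t → x t = y t + k t) ∧
    (∀ t : ℝ, 0 ≤ t → x t ∈ closure D) ∧
    k 0 = 0 ∧ v 0 = 0 ∧
    (∀ t : ℝ, 0 ≤ t → k t = ∫ s in Set.Ioc (0:ℝ) t, nv s ∂v.measure) ∧
    (∀ s : ℝ, 0 ≤ s → x s ∈ frontier D →
      ‖nv s‖ = 1 ∧ ∀ z ∈ closure D, 0 ≤ ⟪z - x s, nv s⟫) ∧
    v.measure {s : ℝ | 0 ≤ s ∧ x s ∉ frontier D} = 0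

set_option maxHeartbeats 1000000
open scoped Topology

section AuxGeneral
variable {E : Type*} [NormedAddCommGroup E] [InnerProductSpace ℝ E]

/-- Projection inequality: inner product with direction to deep interior point. -/
lemma proj_inner_ge_s7 {K : Set E} (hK : Convex ℝ K) {p ξ a : E} {ρ : ℝ} (hρ : 0 < ρ)
    (hp : p ∈ K) (hmin : ∀ w ∈ K, dist ξ p ≤ dist ξ w)
    (hball : Metric.closedBall a ρ ⊆ K) :
    ρ * ‖ξ - p‖ ≤ ⟪ξ - p, p - a⟫ := by
  have key : ∀ w ∈ K, ⟪ξ - p, w - p⟫ ≤ 0 := by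
    have : Nonempty K := ⟨⟨p, hp⟩⟩
    rw [← norm_eq_iInf_iff_real_inner_le_zero hK hp]
    refine le_antisymm (le_ciInf fun w => ?_) (ciInf_le ⟨0, fun c ⟨w, hw⟩ => hw ▸ norm_nonneg _⟩ (⟨p, hp⟩ : K))
    simpa [dist_eq_norm] using hmin w w.2
  by_cases h : ξ - p = 0
  · simp [h]
  · have hn : 0 < ‖ξ - p‖ := norm_pos_iff.2 h
    set u : E := ‖ξ - p‖⁻¹ • (ξ - p) with hu
    have hw : a + ρ • u ∈ K := by
      apply hball
      simp only [Metric.mem_closedBall, dist_eq_norm, add_sub_cancel_left]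
      rw [norm_smul, norm_smul]
      simp [abs_of_pos hρ, abs_of_pos (inv_pos.2 hn), inv_mul_cancel₀ hn.ne']
    have := key _ hw
    have hexp : ⟪ξ - p, a + ρ • u - p⟫ = ⟪ξ - p, a - p⟫ + ρ * ‖ξ - p‖ := by
      have : a + ρ • u - p = (a - p) + ρ • u := by abel
      rw [this, inner_add_right, inner_smul_right, hu, inner_smul_right,
        real_inner_self_eq_norm_mul_norm]
      field_simp
    have h2 : ⟪ξ - p, a - p⟫ + ρ * ‖ξ - p‖ ≤ 0 := hexp ▸ this
    have : ⟪ξ - p, p - a⟫ = - ⟪ξ - p, a - p⟫ := by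
      rw [← inner_neg_right]; congr 1; abel
    linarith [this]

variable [CompleteSpace E]

/-- Symmetrization identity: `∫_s^t ⟪w u, ∫_s^u w⟫ du = ‖∫_s^t w‖² / 2`. -/
lemma integral_inner_primitive {s t : ℝ} (hst : s ≤ t) {w : ℝ → E}
    (hw : IntegrableOn w (Set.Ioc s t)) :
    ∫ u in Set.Ioc s t, ⟪w u, ∫ v in Set.Ioc s u, w v⟫
      = ‖∫ u in Set.Ioc s t, w u‖ ^ 2 / 2 := by
  set μ := volume.restrict (Set.Ioc s t) with hμ
  have hw' : Integrable w μ := hw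
  set F : ℝ × ℝ → ℝ := fun p => ⟪w p.1, w p.2⟫ with hF
  have hFm : AEStronglyMeasurable F (μ.prod μ) :=
    (hw'.aestronglyMeasurable.comp_fst).inner (hw'.aestronglyMeasurable.comp_snd)
  have hFi : Integrable F (μ.prod μ) := by
    refine (hw'.norm.mul_prod hw'.norm).mono' hFm ?_
    filter_upwards with p
    simpa [hF] using abs_real_inner_le_norm (w p.1) (w p.2)
  set W := ∫ u, w u ∂μ with hW
  -- full double integral
  have step1 : (∫ u, (∫ v, F (u, v) ∂μ) ∂μ) = ‖W‖ ^ 2 := by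
    have h1 : ∀ u, (∫ v, F (u, v) ∂μ) = ⟪w u, W⟫ := fun u => integral_inner hw' (w u)
    simp only [h1]
    have h2 : ∀ u, ⟪w u, W⟫ = ⟪W, w u⟫ := fun u => real_inner_comm _ _
    simp only [h2]
    rw [integral_inner hw' W, real_inner_self_eq_norm_sq]
  set G : ℝ × ℝ → ℝ := Set.indicator {p : ℝ × ℝ | p.2 ≤ p.1} F with hG
  set G' : ℝ × ℝ → ℝ := Set.indicator {p : ℝ × ℝ | p.1 < p.2} F with hG'
  have hmle : MeasurableSet {p : ℝ × ℝ | p.2 ≤ p.1} := measurableSet_le measurable_snd measurable_fst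
  have hmlt : MeasurableSet {p : ℝ × ℝ | p.1 < p.2} := measurableSet_lt measurable_fst measurable_snd
  have hGi : Integrable G (μ.prod μ) := hFi.indicator hmle
  have hG'i : Integrable G' (μ.prod μ) := hFi.indicator hmlt
  have hFGG' : ∀ p, F p = G p + G' p := by
    intro p
    rcases le_or_gt p.2 p.1 with h | h
    · simp [hG, hG', Set.indicator_of_mem (show p ∈ {p : ℝ × ℝ | p.2 ≤ p.1} from h),
        Set.indicator_of_notMem (show p ∉ {p : ℝ × ℝ | p.1 < p.2} from not_lt.2 h)]
    · simp [hG, hG', Set.indicator_of_notMem (show p ∉ {p : ℝ × ℝ | p.2 ≤ p.1} from not_le.2 h),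
        Set.indicator_of_mem (show p ∈ {p : ℝ × ℝ | p.1 < p.2} from h)]
  -- slices
  have hGslice : ∀ u, (fun v => G (u, v)) = Set.indicator (Set.Iic u) (fun v => ⟪w u, w v⟫) := by
    intro u; funext v
    rcases le_or_gt v u with h | h
    · rw [Set.indicator_of_mem (Set.mem_Iic.2 h)]
      exact Set.indicator_of_mem (show ((u,v) : ℝ×ℝ) ∈ {p : ℝ × ℝ | p.2 ≤ p.1} from h) F
    · rw [Set.indicator_of_notMem (by simpa using h.not_ge)]
      exact Set.indicator_of_notMem (by simpa using h.not_ge) F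
  have hG'slice : ∀ u, (fun v => G' (u, v)) = Set.indicator (Set.Ioi u) (fun v => ⟪w u, w v⟫) := by
    intro u; funext v
    rcases lt_or_ge u v with h | h
    · rw [Set.indicator_of_mem (Set.mem_Ioi.2 h)]
      exact Set.indicator_of_mem (show ((u,v) : ℝ×ℝ) ∈ {p : ℝ × ℝ | p.1 < p.2} from h) F
    · rw [Set.indicator_of_notMem (by simpa using h.not_gt)]
      exact Set.indicator_of_notMem (by simpa using h.not_gt) F
  have hGsi : ∀ u, Integrable (fun v => G (u, v)) μ := by
    intro u; rw [hGslice u]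
    exact (hw'.const_inner (w u)).indicator measurableSet_Iic
  have hG'si : ∀ u, Integrable (fun v => G' (u, v)) μ := by
    intro u; rw [hG'slice u]
    exact (hw'.const_inner (w u)).indicator measurableSet_Ioi
  have hsplit : (∫ u, (∫ v, F (u, v) ∂μ) ∂μ)
      = (∫ u, (∫ v, G (u, v) ∂μ) ∂μ) + (∫ u, (∫ v, G' (u, v) ∂μ) ∂μ) := by
    have h1 : ∀ u, (∫ v, F (u, v) ∂μ) = (∫ v, G (u, v) ∂μ) + (∫ v, G' (u, v) ∂μ) := by
      intro u
      rw [← integral_add (hGsi u) (hG'si u)]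
      exact integral_congr_ae (Eventually.of_forall fun v => hFGG' (u, v))
    simp only [h1]
    exact integral_add hGi.integral_prod_left hG'i.integral_prod_left
  have hptA : ∀ u ∈ Set.Ioc s t, (∫ v, G (u, v) ∂μ) = ⟪w u, ∫ v in Set.Ioc s u, w v⟫ := by
    intro u hu
    rw [hGslice u, integral_indicator measurableSet_Iic, hμ,
      Measure.restrict_restrict measurableSet_Iic]
    have hset : Set.Iic u ∩ Set.Ioc s t = Set.Ioc s u := by
      ext v; simp only [Set.mem_inter_iff, Set.mem_Iic, Set.mem_Ioc]
      exact ⟨fun ⟨h1, h2, _⟩ => ⟨h2, h1⟩, fun ⟨h1, h2⟩ => ⟨h2, h1, h2.trans hu.2⟩⟩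
    rw [hset]
    exact integral_inner (hw.mono_set (Set.Ioc_subset_Ioc_right hu.2)) (w u)
  have hptB : ∀ v ∈ Set.Ioc s t, (∫ u, G' (u, v) ∂μ) = ⟪w v, ∫ x in Set.Ioc s v, w x⟫ := by
    intro v hv
    have hslice : (fun u => G' (u, v)) = Set.indicator (Set.Iio v) (fun u => ⟪w u, w v⟫) := by
      funext u
      rcases lt_or_ge u v with h | h
      · rw [Set.indicator_of_mem (Set.mem_Iio.2 h)]
        exact Set.indicator_of_mem (show ((u,v) : ℝ×ℝ) ∈ {p : ℝ × ℝ | p.1 < p.2} from h) F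
      · rw [Set.indicator_of_notMem (by simpa using h.not_gt)]
        exact Set.indicator_of_notMem (by simpa using h.not_gt) F
    rw [hslice, integral_indicator measurableSet_Iio, hμ,
      Measure.restrict_restrict measurableSet_Iio]
    have hset : Set.Iio v ∩ Set.Ioc s t = Set.Ioo s v := by
      ext u; simp only [Set.mem_inter_iff, Set.mem_Iio, Set.mem_Ioc, Set.mem_Ioo]
      exact ⟨fun ⟨h1, h2, _⟩ => ⟨h2, h1⟩, fun ⟨h1, h2⟩ => ⟨h2, h1, (h2.le.trans hv.2)⟩⟩
    rw [hset, ← integral_Ioc_eq_integral_Ioo]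
    have : ∀ u, ⟪w u, w v⟫ = ⟪w v, w u⟫ := fun u => real_inner_comm _ _
    simp only [this]
    exact integral_inner (hw.mono_set (Set.Ioc_subset_Ioc_right hv.2)) (w v)
  have hA : (∫ u, (∫ v, G (u, v) ∂μ) ∂μ)
      = ∫ u in Set.Ioc s t, ⟪w u, ∫ v in Set.Ioc s u, w v⟫ := by
    rw [hμ]
    exact setIntegral_congr_fun measurableSet_Ioc fun u hu => hptA u hu
  have hBswap : (∫ u, (∫ v, G' (u, v) ∂μ) ∂μ) = ∫ v, (∫ u, G' (u, v) ∂μ) ∂μ :=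
    integral_integral_swap hG'i
  have hB : (∫ v, (∫ u, G' (u, v) ∂μ) ∂μ)
      = ∫ u in Set.Ioc s t, ⟪w u, ∫ v in Set.Ioc s u, w v⟫ := by
    rw [hμ]
    exact setIntegral_congr_fun measurableSet_Ioc fun v hv => hptB v hv
  have h2A : ‖W‖ ^ 2 = 2 * (∫ u, (∫ v, G (u, v) ∂μ) ∂μ) := by
    rw [← step1, hsplit, hBswap, hB, hA]; ring
  rw [hμ, ← hA]
  linarith

/-- Energy identity for primitives. -/
lemma sq_norm_primitive {w : ℝ → E} {s t : ℝ} (h0s : 0 ≤ s) (hst : s ≤ t)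
    (hw : IntegrableOn w (Set.Ioc 0 t)) (v : E) :
    ‖v + ∫ u in Set.Ioc 0 t, w u‖ ^ 2 = ‖v + ∫ u in Set.Ioc 0 s, w u‖ ^ 2
      + 2 * ∫ u in Set.Ioc s t, ⟪w u, v + ∫ x in Set.Ioc 0 u, w x⟫ := by
  have hwst : IntegrableOn w (Set.Ioc s t) := hw.mono_set (Set.Ioc_subset_Ioc_left h0s)
  set Z : ℝ → E := fun u => ∫ x in Set.Ioc 0 u, w x with hZ
  set P : ℝ → E := fun u => ∫ x in Set.Ioc s u, w x with hP
  have hsplitZ : ∀ u, s ≤ u → u ≤ t → Z u = Z s + P u := by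
    intro u hsu hut
    rw [hZ, hP]
    simp only
    rw [← Set.Ioc_union_Ioc_eq_Ioc h0s hsu,
      setIntegral_union (Set.Ioc_disjoint_Ioc_of_le le_rfl) measurableSet_Ioc
        (hw.mono_set (Set.Ioc_subset_Ioc_right (hsu.trans hut)))
        (hw.mono_set (Set.Ioc_subset_Ioc h0s hut))]
  have hPcont : ContinuousOn P (Set.Icc s t) :=
    intervalIntegral.continuousOn_primitive ((integrableOn_Icc_iff_integrableOn_Ioc (by simp)).2 hwst)
  obtain ⟨K, hK⟩ := isCompact_Icc.exists_bound_of_continuousOn hPcont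
  have hK0 : 0 ≤ K := le_trans (norm_nonneg _) (hK s (Set.left_mem_Icc.2 hst))
  set W := ∫ u in Set.Ioc s t, w u with hW
  have hWP : W = P t := rfl
  have I1 : Integrable (fun u => ⟪w u, v + Z s⟫) (volume.restrict (Set.Ioc s t)) := by
    have h : Integrable (fun u => ⟪v + Z s, w u⟫) (volume.restrict (Set.Ioc s t)) :=
      (hwst : Integrable w _).const_inner (v + Z s)
    have he : (fun u => ⟪v + Z s, w u⟫) = fun u => ⟪w u, v + Z s⟫ :=
      funext fun u => real_inner_comm _ _
    rwa [he] at h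
  have hPmeas : AEStronglyMeasurable P (volume.restrict (Set.Ioc s t)) :=
    (hPcont.mono Set.Ioc_subset_Icc_self).aestronglyMeasurable measurableSet_Ioc
  have I2 : Integrable (fun u => ⟪w u, P u⟫) (volume.restrict (Set.Ioc s t)) := by
    refine (hwst.norm.mul_const K).mono'
      ((hwst : Integrable w _).aestronglyMeasurable.inner hPmeas) ?_
    refine (ae_restrict_iff' measurableSet_Ioc).2 (ae_of_all _ fun u hu => ?_)
    calc ‖⟪w u, P u⟫‖ ≤ ‖w u‖ * ‖P u‖ := by
          simpa using abs_real_inner_le_norm (w u) (P u)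
      _ ≤ ‖w u‖ * K := by
          exact mul_le_mul_of_nonneg_left (hK u (Set.Ioc_subset_Icc_self hu)) (norm_nonneg _)
  have hcongr : ∫ u in Set.Ioc s t, ⟪w u, v + Z u⟫
      = ∫ u in Set.Ioc s t, (⟪w u, v + Z s⟫ + ⟪w u, P u⟫) := by
    refine setIntegral_congr_fun measurableSet_Ioc fun u hu => ?_
    rw [hsplitZ u hu.1.le hu.2, ← inner_add_right]
    congr 1
    abel
  have hint1 : ∫ u in Set.Ioc s t, ⟪w u, v + Z s⟫ = ⟪W, v + Z s⟫ := by
    have he : (fun u => ⟪w u, v + Z s⟫) = fun u => ⟪v + Z s, w u⟫ :=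
      funext fun u => real_inner_comm _ _
    rw [he, integral_inner hwst (v + Z s), real_inner_comm]
  have hint2 : ∫ u in Set.Ioc s t, ⟪w u, P u⟫ = ‖W‖ ^ 2 / 2 :=
    integral_inner_primitive hst hwst
  have hZt : Z t = Z s + W := by rw [hWP]; exact hsplitZ t hst le_rfl
  have hexp : ‖v + Z t‖ ^ 2 = ‖v + Z s‖ ^ 2 + 2 * ⟪v + Z s, W⟫ + ‖W‖ ^ 2 := by
    rw [hZt, show v + (Z s + W) = (v + Z s) + W by abel, ← norm_add_sq_real]
  show ‖v + Z t‖ ^ 2 = ‖v + Z s‖ ^ 2 + 2 * ∫ u in Set.Ioc s t, ⟪w u, v + Z u⟫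
  rw [hcongr, integral_add I1 I2, hint1, hint2, hexp, real_inner_comm]
  ring

end AuxGeneral

section AuxCadlag
variable {E : Type*} [NormedAddCommGroup E]

/-- Existence of subdivisions with small oscillation for càdlàg functions. -/
lemma cadlag_subdiv (f : ℝ → E)
    (hrc : ∀ t : ℝ, 0 ≤ t → ContinuousWithinAt f (Set.Ici t) t)
    (hll : ∀ t : ℝ, 0 < t → ∃ l, Filter.Tendsto f (nhdsWithin t (Set.Iio t)) (nhds l))
    {Q ε : ℝ} (hQ : 0 < Q) (hε : 0 < ε) :
    ∃ r : ℕ, 0 < r ∧ ∃ s : ℕ → ℝ, s 0 = 0 ∧ s r = Q ∧ (∀ k < r, s k < s (k+1)) ∧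
      ∀ k < r, ∀ u ∈ Set.Ico (s k) (s (k+1)), ∀ v ∈ Set.Ico (s k) (s (k+1)),
        ‖f u - f v‖ ≤ ε := by
  set P : ℝ → Prop := fun t => ∃ r : ℕ, 0 < r ∧ ∃ s : ℕ → ℝ, s 0 = 0 ∧ s r = t ∧
    (∀ k < r, s k < s (k+1)) ∧
    ∀ k < r, ∀ u ∈ Set.Ico (s k) (s (k+1)), ∀ v ∈ Set.Ico (s k) (s (k+1)),
      ‖f u - f v‖ ≤ ε with hP
  -- extension lemma
  have hext : ∀ t t', P t → t < t' →
      (∀ u ∈ Set.Ico t t', ∀ v ∈ Set.Ico t t', ‖f u - f v‖ ≤ ε) → P t' := by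
    rintro t t' ⟨r, hr, s, hs0, hsr, hmono, hosc⟩ htt' hosc'
    refine ⟨r+1, Nat.succ_pos r, fun k => if k ≤ r then s k else t', ?_, ?_, ?_, ?_⟩
    · simp [Nat.zero_le r, hs0]
    · simp
    · intro k hk
      dsimp only
      rcases Nat.lt_succ_iff_lt_or_eq.mp hk with hlt | rfl
      · rw [if_pos (Nat.le_of_lt hlt), if_pos (Nat.succ_le_of_lt hlt)]
        exact hmono k hlt
      · rw [if_pos le_rfl, if_neg (Nat.not_succ_le_self k), hsr]
        exact htt'
    · intro k hk u hu v hv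
      dsimp only at hu hv
      rcases Nat.lt_succ_iff_lt_or_eq.mp hk with hlt | rfl
      · rw [if_pos (Nat.le_of_lt hlt), if_pos (Nat.succ_le_of_lt hlt)] at hu hv
        exact hosc k hlt u hu v hv
      · rw [if_pos le_rfl, if_neg (Nat.not_succ_le_self k), hsr] at hu hv
        exact hosc' u hu v hv
  -- base point
  obtain ⟨δ₀, hδ₀, hδ₀'⟩ := Metric.continuousWithinAt_iff.mp (hrc 0 le_rfl) (ε/2) (half_pos hε)
  set t0 : ℝ := min (δ₀/2) Q with ht0
  have ht0pos : 0 < t0 := lt_min (by linarith) hQ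
  have ht0Q : t0 ≤ Q := min_le_right _ _
  have hosc0 : ∀ t', 0 < t' → t' ≤ t0 →
      ∀ u ∈ Set.Ico (0:ℝ) t', ∀ v ∈ Set.Ico (0:ℝ) t', ‖f u - f v‖ ≤ ε := by
    intro t' ht' ht'0 u hu v hv
    have hu' : dist (f u) (f 0) < ε/2 :=
      hδ₀' hu.1 (by rw [Real.dist_eq, sub_zero, abs_of_nonneg hu.1]
                    calc u < t' := hu.2
                    _ ≤ t0 := ht'0
                    _ ≤ δ₀/2 := min_le_left _ _
                    _ < δ₀ := by linarith)
    have hv' : dist (f v) (f 0) < ε/2 :=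
      hδ₀' hv.1 (by rw [Real.dist_eq, sub_zero, abs_of_nonneg hv.1]
                    calc v < t' := hv.2
                    _ ≤ t0 := ht'0
                    _ ≤ δ₀/2 := min_le_left _ _
                    _ < δ₀ := by linarith)
    calc ‖f u - f v‖ = dist (f u) (f v) := (dist_eq_norm _ _).symm
      _ ≤ dist (f u) (f 0) + dist (f 0) (f v) := dist_triangle _ _ _
      _ ≤ ε := by rw [dist_comm (f 0)]; linarith
  have hPbase : ∀ t', 0 < t' → t' ≤ t0 → P t' := by
    intro t' ht' ht'0
    refine ⟨1, one_pos, fun k => if k = 0 then 0 else t', if_pos rfl, if_neg one_ne_zero, ?_, ?_⟩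
    · intro k hk
      interval_cases k
      simpa using ht'
    · intro k hk u hu v hv
      interval_cases k
      simp only [if_pos rfl, if_neg one_ne_zero] at hu hv
      exact hosc0 t' ht' ht'0 u hu v hv
  set S : Set ℝ := {t | 0 < t ∧ t ≤ Q ∧ P t} with hS
  have hSne : t0 ∈ S := ⟨ht0pos, ht0Q, hPbase t0 ht0pos le_rfl⟩
  have hSbdd : BddAbove S := ⟨Q, fun t ht => ht.2.1⟩
  set T := sSup S with hT
  have hT_le : T ≤ Q := csSup_le ⟨t0, hSne⟩ fun t ht => ht.2.1
  have hT_pos : 0 < T := lt_of_lt_of_le ht0pos (le_csSup hSbdd hSne)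
  have hPT : P T := by
    obtain ⟨l, hl⟩ := hll T hT_pos
    have hev : {u : ℝ | dist (f u) l < ε/2} ∈ 𝓝[<] T :=
      Metric.tendsto_nhds.mp hl (ε/2) (half_pos hε)
    obtain ⟨δ, hδpos, hδ⟩ := Metric.mem_nhdsWithin_iff.mp hev
    obtain ⟨t, htS, hlt⟩ : ∃ t ∈ S, T - δ < t :=
      exists_lt_of_lt_csSup ⟨t0, hSne⟩ (by linarith)
    have htT : t ≤ T := le_csSup hSbdd htS
    rcases eq_or_lt_of_le htT with rfl | htlt
    · exact htS.2.2
    · refine hext t T htS.2.2 htlt ?_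
      intro u hu v hv
      have hmem : ∀ z, t ≤ z → z < T → dist (f z) l < ε/2 := by
        intro z h1 h2
        apply hδ
        constructor
        · rw [Metric.mem_ball, Real.dist_eq, abs_of_nonpos (by linarith), neg_sub]
          linarith
        · exact h2
      have h1 := hmem u hu.1 hu.2
      have h2 := hmem v hv.1 hv.2
      calc ‖f u - f v‖ = dist (f u) (f v) := (dist_eq_norm _ _).symm
        _ ≤ dist (f u) l + dist l (f v) := dist_triangle _ _ _
        _ ≤ ε := by rw [dist_comm l]; linarith
  have hTQ : T = Q := by
    by_contra hne
    have hTQ' : T < Q := lt_of_le_of_ne hT_le hne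
    obtain ⟨δ, hδpos, hδ⟩ :=
      Metric.continuousWithinAt_iff.mp (hrc T hT_pos.le) (ε/2) (half_pos hε)
    set t' : ℝ := min (T + δ/2) Q with ht'
    have hTt' : T < t' := lt_min (by linarith) hTQ'
    have ht'Q : t' ≤ Q := min_le_right _ _
    have hPt' : P t' := by
      refine hext T t' hPT hTt' ?_
      intro u hu v hv
      have hmem : ∀ z, T ≤ z → z < t' → dist (f z) (f T) < ε/2 := by
        intro z h1 h2
        apply hδ (Set.mem_Ici.2 h1)
        rw [Real.dist_eq, abs_of_nonneg (by linarith)]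
        have : z < T + δ/2 := lt_of_lt_of_le h2 (min_le_left _ _)
        linarith
      have h1 := hmem u hu.1 hu.2
      have h2 := hmem v hv.1 hv.2
      calc ‖f u - f v‖ = dist (f u) (f v) := (dist_eq_norm _ _).symm
        _ ≤ dist (f u) (f T) + dist (f T) (f v) := dist_triangle _ _ _
        _ ≤ ε := by rw [dist_comm (f T)]; linarith
    have : t' ∈ S := ⟨lt_trans hT_pos hTt', ht'Q, hPt'⟩
    exact absurd (le_csSup hSbdd this) (not_le.2 hTt')
  exact hTQ ▸ hPT

/-- A function with an oscillation-controlled subdivision is bounded on the interval. -/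
lemma subdiv_bound (f : ℝ → E) (a : E) {r : ℕ} {s : ℕ → ℝ} {ε : ℝ} (hε : 0 ≤ ε)
    (hs0 : s 0 = 0) (hmono : ∀ k < r, s k < s (k+1))
    (hosc : ∀ k < r, ∀ u ∈ Set.Ico (s k) (s (k+1)), ∀ v ∈ Set.Ico (s k) (s (k+1)),
      ‖f u - f v‖ ≤ ε) :
    ∃ M, ∀ u ∈ Set.Icc 0 (s r), ‖f u - a‖ ≤ M := by
  set My := (Finset.range (r+1)).sup' ⟨0, by simp⟩ (fun k => ‖f (s k) - a‖) with hMy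
  have hsup : ∀ k, k ≤ r → ‖f (s k) - a‖ ≤ My :=
    fun k hk => Finset.le_sup' (fun k => ‖f (s k) - a‖) (Finset.mem_range.2 (Nat.lt_succ_of_le hk))
  refine ⟨My + ε, ?_⟩
  have hclaim : ∀ k, k ≤ r → ∀ u, 0 ≤ u → u ≤ s k → ‖f u - a‖ ≤ My + ε := by
    intro k
    induction k with
    | zero =>
      intro _ u hu1 hu2
      have : u = 0 := le_antisymm (hs0 ▸ hu2) hu1
      rw [this, ← hs0]
      linarith [hsup 0 (Nat.zero_le r)]
    | succ k ih =>
      intro hk1 u hu1 hu2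
      have hk : k < r := hk1
      rcases le_or_gt u (s k) with hle | hgt
      · exact ih hk.le u hu1 hle
      · rcases eq_or_lt_of_le hu2 with rfl | hlt
        · linarith [hsup (k+1) hk1]
        · have h1 := hosc k hk u ⟨hgt.le, hlt⟩ (s k) ⟨le_rfl, hmono k hk⟩
          calc ‖f u - a‖ = ‖(f u - f (s k)) + (f (s k) - a)‖ := by congr 1; abel
            _ ≤ ‖f u - f (s k)‖ + ‖f (s k) - a‖ := norm_add_le _ _
            _ ≤ My + ε := by linarith [hsup k hk.le]
  exact fun u hu => hclaim r le_rfl u hu.1 hu.2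

end AuxCadlag

/-- Key interval estimate for penalized solutions. -/
lemma keyEst {D : Set (EuclideanSpace ℝ (Fin d))} (hconvD : Convex ℝ D)
    {proj : EuclideanSpace ℝ (Fin d) → EuclideanSpace ℝ (Fin d)}
    (hproj : IsProjOn (closure D) proj)
    {a : EuclideanSpace ℝ (Fin d)} {ρ : ℝ} (hρ : 0 < ρ)
    (hball : Metric.closedBall a (2*ρ) ⊆ closure D)
    {c : ℝ} (hc : 0 ≤ c) {y x : ℝ → EuclideanSpace ℝ (Fin d)}
    (hsol : PenalizedSol proj c y x)
    {s t : ℝ} (h0s : 0 ≤ s) (hst : s ≤ t)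
    {β : ℝ} (hβ : 0 ≤ β) (hosc : ∀ u ∈ Set.Ioc s t, ‖y t - y u‖ ≤ β) :
    ‖x t - a‖^2 + 2*c*(2*ρ - β) * ∫ u in Set.Ioc s t, ‖x u - proj (x u)‖
      ≤ (‖x s - a‖ + ‖y t - y s‖)^2 := by
  have h0t : (0:ℝ) ≤ t := h0s.trans hst
  set h : ℝ → EuclideanSpace ℝ (Fin d) := fun u => x u - proj (x u) with hh
  set w : ℝ → EuclideanSpace ℝ (Fin d) := fun u => (-c) • h u with hwdef
  have hhi : IntegrableOn h (Set.Ioc 0 t) := (hsol.1 t h0t).1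
  have hwi : IntegrableOn w (Set.Ioc 0 t) := by
    have := (hhi : Integrable h _).smul (-c)
    exact this
  set Z : ℝ → EuclideanSpace ℝ (Fin d) := fun u => ∫ v in Set.Ioc 0 u, w v with hZdef
  have hxeq : ∀ u, 0 ≤ u → x u = y u + Z u := by
    intro u hu
    have he := hsol.2 u hu
    have h2 : Z u = (-c) • ∫ v in Set.Ioc 0 u, h v := by
      rw [hZdef]; exact integral_smul (-c) h
    rw [h2, ← intervalIntegral.integral_of_le hu, neg_smul, ← sub_eq_add_neg]
    exact he
  have key := sq_norm_primitive h0s hst hwi (y t - a)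
  have e1 : y t - a + ∫ u in Set.Ioc 0 t, w u = x t - a := by
    rw [show (∫ u in Set.Ioc 0 t, w u) = Z t from rfl, hxeq t h0t]; abel
  have e2 : y t - a + ∫ u in Set.Ioc 0 s, w u = (x s - a) + (y t - y s) := by
    rw [show (∫ u in Set.Ioc 0 s, w u) = Z s from rfl, hxeq s h0s]; abel
  rw [e1, e2] at key
  -- continuity of Z on [0, t]
  have hZcont : ContinuousOn Z (Set.Icc 0 t) :=
    intervalIntegral.continuousOn_primitive ((integrableOn_Icc_iff_integrableOn_Ioc (by simp)).2 hwi)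
  have hgcont : ContinuousOn (fun u => y t - a + Z u) (Set.Icc 0 t) :=
    continuousOn_const.add hZcont
  obtain ⟨K, hK⟩ := isCompact_Icc.exists_bound_of_continuousOn hgcont
  have hwst : IntegrableOn w (Set.Ioc s t) := hwi.mono_set (Set.Ioc_subset_Ioc_left h0s)
  have hhst : IntegrableOn h (Set.Ioc s t) := hhi.mono_set (Set.Ioc_subset_Ioc_left h0s)
  have hsub : Set.Ioc s t ⊆ Set.Icc 0 t := fun u hu => ⟨h0s.trans hu.1.le, hu.2⟩
  have hgmeas : AEStronglyMeasurable (fun u => y t - a + Z u) (volume.restrict (Set.Ioc s t)) :=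
    (hgcont.mono hsub).aestronglyMeasurable measurableSet_Ioc
  have I1 : Integrable (fun u => ⟪w u, y t - a + Z u⟫) (volume.restrict (Set.Ioc s t)) := by
    refine (hwst.norm.mul_const K).mono'
      ((hwst : Integrable w _).aestronglyMeasurable.inner hgmeas) ?_
    refine (ae_restrict_iff' measurableSet_Ioc).2 (ae_of_all _ fun u hu => ?_)
    calc ‖⟪w u, y t - a + Z u⟫‖ ≤ ‖w u‖ * ‖y t - a + Z u‖ := by
          simpa using abs_real_inner_le_norm (w u) _
      _ ≤ ‖w u‖ * K := mul_le_mul_of_nonneg_left (hK u (hsub hu)) (norm_nonneg _)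
  have I2 : Integrable (fun u => -(c*(2*ρ - β)) * ‖h u‖) (volume.restrict (Set.Ioc s t)) :=
    (hhst.norm).const_mul _
  -- pointwise bound
  have hpt : ∀ u ∈ Set.Ioc s t, ⟪w u, y t - a + Z u⟫ ≤ -(c*(2*ρ - β)) * ‖h u‖ := by
    intro u hu
    have hu0 : (0:ℝ) ≤ u := h0s.trans hu.1.le
    have hyZ : y t - a + Z u = (x u - a) + (y t - y u) := by
      rw [hxeq u hu0]; abel
    have hinner : (2*ρ - β) * ‖h u‖ ≤ ⟪h u, (x u - a) + (y t - y u)⟫ := by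
      have hdecomp : (x u - a) = h u + (proj (x u) - a) := by
          show _ = (x u - proj (x u)) + (proj (x u) - a); rw [sub_add_sub_cancel]
      have hp := hproj (x u)
      have hproj_ineq : 2*ρ * ‖h u‖ ≤ ⟪h u, proj (x u) - a⟫ := by
        have := proj_inner_ge_s7 (hconvD.closure) (mul_pos two_pos hρ) hp.1 hp.2 hball
        exact this
      have hcross : -(β * ‖h u‖) ≤ ⟪h u, y t - y u⟫ := by
        have habs : |⟪h u, y t - y u⟫| ≤ ‖h u‖ * ‖y t - y u‖ := abs_real_inner_le_norm _ _
        have hb : ‖h u‖ * ‖y t - y u‖ ≤ ‖h u‖ * β :=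
          mul_le_mul_of_nonneg_left (hosc u hu) (norm_nonneg _)
        nlinarith [neg_abs_le ⟪h u, y t - y u⟫]
      have hsq : 0 ≤ ⟪h u, h u⟫ := real_inner_self_nonneg
      rw [hdecomp, inner_add_right, inner_add_right]
      nlinarith
    rw [hyZ, hwdef]
    simp only [real_inner_smul_left]
    nlinarith [norm_nonneg (h u), mul_le_mul_of_nonneg_left hinner hc]
  have hmono : ∫ u in Set.Ioc s t, ⟪w u, y t - a + Z u⟫
      ≤ ∫ u in Set.Ioc s t, -(c*(2*ρ - β)) * ‖h u‖ :=
    setIntegral_mono_on I1 I2 measurableSet_Ioc hpt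
  rw [integral_const_mul] at hmono
  have htri : ‖(x s - a) + (y t - y s)‖ ≤ ‖x s - a‖ + ‖y t - y s‖ := norm_add_le _ _
  have hsq2 : ‖(x s - a) + (y t - y s)‖^2 ≤ (‖x s - a‖ + ‖y t - y s‖)^2 := by
    have := norm_nonneg ((x s - a) + (y t - y s))
    nlinarith
  nlinarith [key, hmono]

/-- Recursive bound sequence. -/
noncomputable def bfun (M ρ : ℝ) : ℕ → ℝ
  | 0 => M
  | k+1 => Real.sqrt ((bfun M ρ k + 2*M)^2 + (2*M/ρ)*(bfun M ρ k + ρ)^2)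

lemma bfun_nonneg {M ρ : ℝ} (hM : 0 ≤ M) : ∀ k, 0 ≤ bfun M ρ k
  | 0 => hM
  | (k+1) => Real.sqrt_nonneg _

lemma le_of_sq_le_sq' {a b : ℝ} (ha : 0 ≤ a) (hb : 0 ≤ b) (h : a^2 ≤ b^2) : a ≤ b := by
  nlinarith

lemma bfun_mono {M ρ : ℝ} (hM : 0 ≤ M) (hρ : 0 < ρ) : Monotone (bfun M ρ) := by
  apply monotone_nat_of_le_succ
  intro k
  have h0 : 0 ≤ bfun M ρ k := bfun_nonneg hM k
  apply le_of_sq_le_sq' h0 (Real.sqrt_nonneg _)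
  rw [Real.sq_sqrt (by positivity)]
  nlinarith [div_nonneg (by linarith : (0:ℝ) ≤ 2*M) hρ.le, sq_nonneg (bfun M ρ k + ρ)]

/-- Main bound given a subdivision with small oscillation. -/
lemma main_bound {D : Set (EuclideanSpace ℝ (Fin d))} (hconvD : Convex ℝ D)
    {proj : EuclideanSpace ℝ (Fin d) → EuclideanSpace ℝ (Fin d)}
    (hproj : IsProjOn (closure D) proj)
    {a : EuclideanSpace ℝ (Fin d)} {ρ : ℝ} (hρ : 0 < ρ)
    (hball : Metric.closedBall a (2*ρ) ⊆ closure D)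
    {c : ℝ} (hc : 0 ≤ c) {y x : ℝ → EuclideanSpace ℝ (Fin d)}
    (hsol : PenalizedSol proj c y x)
    {r : ℕ} {s : ℕ → ℝ} (hr : 0 < r) (hs0 : s 0 = 0)
    (hmono : ∀ k < r, s k < s (k+1))
    (hosc : ∀ k < r, ∀ u ∈ Set.Ico (s k) (s (k+1)), ∀ v ∈ Set.Ico (s k) (s (k+1)),
      ‖y u - y v‖ ≤ ρ)
    {M : ℝ} (hM : ∀ u ∈ Set.Icc 0 (s r), ‖y u - a‖ ≤ M)
    {q : ℝ} (h0q : 0 ≤ q) (hqr : q ≤ s r) :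
    (∀ t ∈ Set.Icc 0 q, ‖x t - a‖ ≤ bfun M ρ r + ρ) ∧
    c * ∫ u in Set.Ioc 0 q, ‖x u - proj (x u)‖ ≤ r * (bfun M ρ r + ρ)^2 / (2*ρ) := by
  set h : ℝ → EuclideanSpace ℝ (Fin d) := fun u => x u - proj (x u) with hh
  have hmono' : ∀ i j, i ≤ j → j ≤ r → s i ≤ s j := by
    intro i j hij hjr
    induction j with
    | zero => obtain rfl : i = 0 := Nat.le_zero.mp hij; exact le_rfl
    | succ n ih =>
      rcases Nat.lt_succ_iff_lt_or_eq.mp (Nat.lt_succ_of_le hij) with hlt | rfl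
      · exact (ih (Nat.lt_succ_iff.mp hlt) (by omega)).trans (hmono n (by omega)).le
      · exact le_rfl
  have hsnn : ∀ k, k ≤ r → 0 ≤ s k := fun k hk => hs0 ▸ hmono' 0 k (Nat.zero_le k) hk
  have hsr_nn : 0 ≤ s r := hsnn r le_rfl
  have hM0 : 0 ≤ M := le_trans (norm_nonneg _) (hM 0 ⟨le_rfl, hsr_nn⟩)
  have hx0 : x 0 = y 0 := by
    have := hsol.2 0 le_rfl
    simpa using this
  have hxa0 : ‖x 0 - a‖ ≤ M := hx0 ▸ hM 0 ⟨le_rfl, hsr_nn⟩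
  have hhi : ∀ T, 0 ≤ T → IntegrableOn h (Set.Ioc 0 T) := fun T hT => (hsol.1 T hT).1
  -- Case A : within an oscillation interval
  have caseA : ∀ k, k < r → ∀ t, s k ≤ t → t < s (k+1) →
      ‖x t - a‖^2 + 2*c*ρ * ∫ u in Set.Ioc (s k) t, ‖h u‖ ≤ (‖x (s k) - a‖ + ρ)^2 := by
    intro k hk t hskt htk1
    have h0sk : 0 ≤ s k := hsnn k hk.le
    have hoscA : ∀ u ∈ Set.Ioc (s k) t, ‖y t - y u‖ ≤ ρ := by
      intro u hu
      exact hosc k hk t ⟨hskt, htk1⟩ u ⟨hu.1.le, lt_of_le_of_lt hu.2 htk1⟩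
    have key := keyEst hconvD hproj hρ hball hc hsol h0sk hskt hρ.le hoscA
    have hyb : ‖y t - y (s k)‖ ≤ ρ :=
      hosc k hk t ⟨hskt, htk1⟩ (s k) ⟨le_rfl, hmono k hk⟩
    have h2 : 2*c*(2*ρ - ρ) = 2*c*ρ := by ring
    rw [h2] at key
    have hxnn : 0 ≤ ‖x (s k) - a‖ := norm_nonneg _
    nlinarith [norm_nonneg (y t - y (s k))]
  have hintnn : ∀ s' t', (0:ℝ) ≤ ∫ u in Set.Ioc s' t', ‖h u‖ :=
    fun s' t' => setIntegral_nonneg measurableSet_Ioc (fun u _ => norm_nonneg _)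
  -- Case A' : pointwise bound inside interval
  have caseA' : ∀ k, k < r → ∀ t, s k ≤ t → t < s (k+1) →
      ‖x t - a‖ ≤ ‖x (s k) - a‖ + ρ := by
    intro k hk t h1 h2
    have := caseA k hk t h1 h2
    have h3 := hintnn (s k) t
    apply le_of_sq_le_sq' (norm_nonneg _) (by positivity)
    nlinarith [mul_nonneg (mul_nonneg (by linarith : (0:ℝ) ≤ 2*c) hρ.le) h3]
  -- Case Int : integral bound up to the right endpoint
  have caseInt : ∀ k, k < r → 2*c*ρ * ∫ u in Set.Ioc (s k) (s (k+1)), ‖h u‖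
      ≤ (‖x (s k) - a‖ + ρ)^2 := by
    intro k hk
    set sk := s k with hsk
    set sk1 := s (k+1) with hsk1
    have hlt : sk < sk1 := hmono k hk
    have h0sk : 0 ≤ sk := hsnn k hk.le
    set u : ℕ → ℝ := fun n => sk1 - (sk1 - sk)/(n+1) with hu
    have hupos : ∀ n, sk ≤ u n ∧ u n < sk1 := by
      intro n
      constructor
      · rw [hu]; simp only
        have hn : (0:ℝ) ≤ (n:ℝ) := Nat.cast_nonneg n
        have h1 : (sk1 - sk)/((n:ℝ)+1) ≤ sk1 - sk :=
          div_le_self (by linarith) (by linarith)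
        linarith
      · rw [hu]; simp only
        have hn : (0:ℝ) ≤ (n:ℝ) := Nat.cast_nonneg n
        have : 0 < (sk1 - sk)/((n:ℝ)+1) := div_pos (by linarith) (by linarith)
        linarith
    have humono : Monotone (fun n => Set.Ioc sk (u n)) := by
      intro m n hmn
      apply Set.Ioc_subset_Ioc_right
      rw [hu]; simp only
      have hcast : ((m:ℝ)) ≤ (n:ℝ) := Nat.cast_le.mpr hmn
      have : (sk1 - sk)/((n:ℝ)+1) ≤ (sk1 - sk)/((m:ℝ)+1) := by
        apply div_le_div_of_nonneg_left (by linarith) (by positivity) (by linarith)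
      linarith
    have hunion : (⋃ n, Set.Ioc sk (u n)) = Set.Ioo sk sk1 := by
      ext z
      simp only [Set.mem_iUnion, Set.mem_Ioc, Set.mem_Ioo]
      constructor
      · rintro ⟨n, h1, h2⟩; exact ⟨h1, lt_of_le_of_lt h2 (hupos n).2⟩
      · rintro ⟨h1, h2⟩
        obtain ⟨n, hn⟩ := exists_nat_gt ((sk1 - sk)/(sk1 - z))
        refine ⟨n, h1, ?_⟩
        rw [hu]; simp only
        have hz : 0 < sk1 - z := by linarith
        have : (sk1 - sk)/((n:ℝ)+1) ≤ sk1 - z := by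
          rw [div_le_iff₀ (by positivity)]
          have h2 : (sk1 - sk)/(sk1 - z) < (n:ℝ)+1 := by linarith
          have := (div_lt_iff₀ hz).mp h2
          nlinarith
        linarith
    have hsk1r : sk1 ≤ s r := hmono' (k+1) r hk le_rfl
    have hinte : IntegrableOn (fun u => ‖h u‖) (Set.Ioo sk sk1) := by
      have hbig : IntegrableOn (fun u => ‖h u‖) (Set.Ioc 0 (s r)) := (hhi (s r) hsr_nn).norm
      exact hbig.mono_set (fun z hz => ⟨lt_of_le_of_lt h0sk hz.1, hz.2.le.trans hsk1r⟩)
    have hlim := tendsto_setIntegral_of_monotone (fun n => measurableSet_Ioc) humono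
      (hunion ▸ hinte)
    have hbd : ∀ n, 2*c*ρ * ∫ u' in Set.Ioc sk (u n), ‖h u'‖ ≤ (‖x sk - a‖ + ρ)^2 := by
      intro n
      have := caseA k hk (u n) (hupos n).1 (hupos n).2
      nlinarith [sq_nonneg ‖x (u n) - a‖, norm_nonneg (x (u n) - a)]
    have hlim2 : Tendsto (fun n => 2*c*ρ * ∫ u' in Set.Ioc sk (u n), ‖h u'‖) atTop
        (𝓝 (2*c*ρ * ∫ u' in ⋃ n, Set.Ioc sk (u n), ‖h u'‖)) := hlim.const_mul _
    have hle := le_of_tendsto hlim2 (Eventually.of_forall hbd)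
    rw [hunion] at hle
    rw [integral_Ioc_eq_integral_Ioo]
    exact hle
  -- bound at subdivision points
  have hb : ∀ k, k ≤ r → ‖x (s k) - a‖ ≤ bfun M ρ k := by
    intro k
    induction k with
    | zero => intro _; rw [hs0]; exact hxa0
    | succ k ih =>
      intro hk1
      have hk : k < r := hk1
      have hbk := ih hk.le
      have h0sk : 0 ≤ s k := hsnn k hk.le
      have hsk1r : s (k+1) ≤ s r := hmono' (k+1) r hk1 le_rfl
      have hb0 : 0 ≤ bfun M ρ k := bfun_nonneg hM0 k
      have hoscB : ∀ u ∈ Set.Ioc (s k) (s (k+1)), ‖y (s (k+1)) - y u‖ ≤ 2*M := by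
        intro u hu
        have h1 := hM u ⟨le_trans h0sk hu.1.le, hu.2.trans hsk1r⟩
        have h2 := hM (s (k+1)) ⟨hsnn (k+1) hk1, hsk1r⟩
        calc ‖y (s (k+1)) - y u‖ = ‖(y (s (k+1)) - a) - (y u - a)‖ := by congr 1; abel
          _ ≤ ‖y (s (k+1)) - a‖ + ‖y u - a‖ := norm_sub_le _ _
          _ ≤ 2*M := by linarith
      have key := keyEst hconvD hproj hρ hball hc hsol h0sk (hmono k hk).le
        (by linarith : (0:ℝ) ≤ 2*M) hoscB
      have hyb : ‖y (s (k+1)) - y (s k)‖ ≤ 2*M := by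
        have h1 := hM (s k) ⟨h0sk, hmono' k r hk.le le_rfl⟩
        have h2 := hM (s (k+1)) ⟨hsnn (k+1) hk1, hsk1r⟩
        calc ‖y (s (k+1)) - y (s k)‖ = ‖(y (s (k+1)) - a) - (y (s k) - a)‖ := by congr 1; abel
          _ ≤ ‖y (s (k+1)) - a‖ + ‖y (s k) - a‖ := norm_sub_le _ _
          _ ≤ 2*M := by linarith
      have hCi := caseInt k hk
      set I := ∫ u in Set.Ioc (s k) (s (k+1)), ‖h u‖ with hI
      have hInn : 0 ≤ I := hintnn _ _
      apply le_of_sq_le_sq' (norm_nonneg _) (Real.sqrt_nonneg _)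
      rw [Real.sq_sqrt (by positivity)]
      have e1 : (‖x (s k) - a‖ + ‖y (s (k+1)) - y (s k)‖)^2 ≤ (bfun M ρ k + 2*M)^2 := by
        nlinarith [norm_nonneg (x (s k) - a), norm_nonneg (y (s (k+1)) - y (s k))]
      have e2 : (‖x (s k) - a‖ + ρ)^2 ≤ (bfun M ρ k + ρ)^2 := by
        nlinarith [norm_nonneg (x (s k) - a)]
      have hMρ : 0 ≤ 2*M/ρ := by positivity
      have h4 : 2*c*ρ*I ≤ (bfun M ρ k + ρ)^2 := le_trans hCi e2
      have hkey2 : ‖x (s (k+1)) - a‖^2 ≤ (bfun M ρ k + 2*M)^2 + 4*c*M*I - 4*c*ρ*I := by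
        nlinarith [key, e1]
      have h5 : 4*c*M*I = (2*M/ρ)*(2*c*ρ*I) := by field_simp; ring
      have h6 : 4*c*M*I ≤ (2*M/ρ)*((bfun M ρ k + ρ)^2) := by
        rw [h5]; exact mul_le_mul_of_nonneg_left h4 hMρ
      have h7 : 0 ≤ 4*c*ρ*I := by positivity
      linarith
  -- sup bound up to each subdivision point
  have hsup : ∀ k, k ≤ r → ∀ t, 0 ≤ t → t ≤ s k → ‖x t - a‖ ≤ bfun M ρ k + ρ := by
    intro k
    induction k with
    | zero =>
      intro _ t h0t hts
      have ht0 : t = 0 := le_antisymm (hs0 ▸ hts) h0t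
      rw [ht0]
      have : bfun M ρ 0 = M := rfl
      linarith [hxa0]
    | succ k ih =>
      intro hk1 t h0t hts
      have hk : k < r := hk1
      have hmb : bfun M ρ k ≤ bfun M ρ (k+1) := bfun_mono hM0 hρ (Nat.le_succ k)
      rcases le_or_gt t (s k) with hle | hgt
      · have := ih hk.le t h0t hle
        linarith
      · rcases eq_or_lt_of_le hts with heq | hlt
        · rw [heq]
          have := hb (k+1) hk1
          linarith [hρ.le]
        · have := caseA' k hk t hgt.le hlt
          have hbk := hb k hk.le
          linarith
  refine ⟨fun t ht => hsup r le_rfl t ht.1 (ht.2.trans hqr), ?_⟩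
  -- integral bound
  have hclaim2 : ∀ k, k ≤ r →
      2*c*ρ * ∫ u in Set.Ioc 0 (s k), ‖h u‖ ≤ k * (bfun M ρ r + ρ)^2 := by
    intro k
    induction k with
    | zero => intro _; rw [hs0]; simp
    | succ k ih =>
      intro hk1
      have hk : k < r := hk1
      have h0sk : 0 ≤ s k := hsnn k hk.le
      have hsplit : ∫ u in Set.Ioc 0 (s (k+1)), ‖h u‖
          = (∫ u in Set.Ioc 0 (s k), ‖h u‖) + ∫ u in Set.Ioc (s k) (s (k+1)), ‖h u‖ := by
        rw [← Set.Ioc_union_Ioc_eq_Ioc h0sk (hmono k hk).le]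
        have hbig : IntegrableOn (fun u => ‖h u‖) (Set.Ioc 0 (s (k+1))) :=
          (hhi _ (hsnn (k+1) hk1)).norm
        exact setIntegral_union (Set.Ioc_disjoint_Ioc_of_le le_rfl) measurableSet_Ioc
          (hbig.mono_set (Set.Ioc_subset_Ioc_right (hmono k hk).le))
          (hbig.mono_set (Set.Ioc_subset_Ioc_left h0sk))
      have h1 := ih hk.le
      have h2 := caseInt k hk
      have h3 : (‖x (s k) - a‖ + ρ)^2 ≤ (bfun M ρ r + ρ)^2 := by
        have hbk := hb k hk.le
        have hmb : bfun M ρ k ≤ bfun M ρ r := bfun_mono hM0 hρ hk.le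
        nlinarith [norm_nonneg (x (s k) - a), bfun_nonneg (ρ := ρ) hM0 k]
      rw [hsplit]
      push_cast
      nlinarith [h1, h2, h3]
  have hfinal := hclaim2 r le_rfl
  have hmonoI : ∫ u in Set.Ioc 0 q, ‖h u‖ ≤ ∫ u in Set.Ioc 0 (s r), ‖h u‖ := by
    apply setIntegral_mono_set ((hhi (s r) hsr_nn).norm)
      ((ae_restrict_iff' measurableSet_Ioc).2 (ae_of_all _ fun u _ => norm_nonneg _))
      (HasSubset.Subset.eventuallyLE (Set.Ioc_subset_Ioc_right hqr))
  rw [le_div_iff₀ (by linarith : (0:ℝ) < 2*ρ)]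
  have hmul : 2*c*ρ * ∫ u in Set.Ioc 0 q, ‖h u‖ ≤ 2*c*ρ * ∫ u in Set.Ioc 0 (s r), ‖h u‖ :=
    mul_le_mul_of_nonneg_left hmonoI (by positivity)
  nlinarith [hfinal, hmul]


/-- Theorem 2.3(i): uniform boundedness of penalized solutions and of the variations of the
penalization terms, when `y^n → y` in the `J₁` topology. -/
theorem stmt7 (d : ℕ) (D : Set (EuclideanSpace ℝ (Fin d)))
    (hD : IsOpen D) (hconv : Convex ℝ D) (hne : D.Nonempty)
    (proj : EuclideanSpace ℝ (Fin d) → EuclideanSpace ℝ (Fin d))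
    (hproj : IsProjOn (closure D) proj)
    (yn : ℕ → ℝ → EuclideanSpace ℝ (Fin d)) (y : ℝ → EuclideanSpace ℝ (Fin d))
    (hyn : ∀ n, Cadlag (yn n)) (hy : Cadlag y)
    (hyn0 : ∀ n, yn n 0 ∈ closure D)
    (hJ1 : J1Tendsto yn y)
    (xn : ℕ → ℝ → EuclideanSpace ℝ (Fin d))
    (hxn : ∀ n : ℕ, PenalizedSol proj (n : ℝ) (yn n) (xn n)) :
    ∀ q : ℝ, 0 < q →
      (∃ C : ℝ, ∀ n : ℕ, ∀ t ∈ Set.Icc (0:ℝ) q, ‖xn n t‖ ≤ C) ∧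
      (∃ C : ℝ, ∀ n : ℕ, (n : ℝ) * ∫ s in (0:ℝ)..q, ‖xn n s - proj (xn n s)‖ ≤ C) := by
  intro q hq
  obtain ⟨a, ha⟩ := hne
  obtain ⟨ra, hra, hball0⟩ := Metric.isOpen_iff.mp hD a ha
  set ρ : ℝ := ra/4 with hρdef
  have hρ : 0 < ρ := by positivity
  have hball : Metric.closedBall a (2*ρ) ⊆ closure D := by
    intro z hz
    refine subset_closure (hball0 ?_)
    rw [Metric.mem_ball]
    calc dist z a ≤ 2*ρ := hz
      _ < ra := by rw [hρdef]; linarith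
  obtain ⟨hy1, hy2⟩ := hy
  obtain ⟨lam, hlamprop, hconv2⟩ := hJ1
  set Q : ℝ := q + 1 with hQdef
  have hQpos : 0 < Q := by linarith
  set εJ : ℝ := min (ρ/4) (1/2) with hεJdef
  have hεJpos : 0 < εJ := lt_min (by positivity) (by norm_num)
  have hεJρ : εJ ≤ ρ/4 := min_le_left _ _
  have hεJh : εJ ≤ 1/2 := min_le_right _ _
  obtain ⟨N, hN⟩ := hconv2 Q hQpos εJ hεJpos
  obtain ⟨r, hr, s, hs0, hsrQ, hsmono, hsosc⟩ :=
    cadlag_subdiv y hy1 hy2 hQpos (show (0:ℝ) < ρ/4 by positivity)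
  have hsmono' : ∀ i j, i ≤ j → j ≤ r → s i ≤ s j := by
    intro i j hij hjr
    induction j with
    | zero => obtain rfl : i = 0 := Nat.le_zero.mp hij; exact le_rfl
    | succ m ih =>
      rcases Nat.lt_succ_iff_lt_or_eq.mp (Nat.lt_succ_of_le hij) with hlt | rfl
      · exact (ih (Nat.lt_succ_iff.mp hlt) (by omega)).trans (hsmono m (by omega)).le
      · exact le_rfl
  have hsnn : ∀ k, k ≤ r → 0 ≤ s k := fun k hk => hs0 ▸ hsmono' 0 k (Nat.zero_le k) hk
  obtain ⟨My, hMy⟩ := subdiv_bound y a (le_of_lt (show (0:ℝ) < ρ/4 by positivity))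
    hs0 hsmono hsosc
  set MM : ℝ := My + εJ with hMMdef
  set B1 : ℝ := bfun MM ρ r + ρ + ‖a‖ with hB1def
  set B2 : ℝ := r * (bfun MM ρ r + ρ)^2 / (2*ρ) with hB2def
  have hUnif : ∀ n, N ≤ n → (∀ t ∈ Set.Icc (0:ℝ) q, ‖xn n t‖ ≤ B1) ∧
      ((n:ℝ) * ∫ u in Set.Ioc (0:ℝ) q, ‖xn n u - proj (xn n u)‖ ≤ B2) := by
    intro n hn
    obtain ⟨hsm, hcont, hlam0, _⟩ := hlamprop n
    have hJ := hN n hn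
    set σ : ℕ → ℝ := fun k => lam n (s k) with hσdef
    have hσ0 : σ 0 = 0 := by rw [hσdef]; simp only; rw [hs0, hlam0]
    have hσmono : ∀ k < r, σ k < σ (k+1) := fun k hk => hsm (hsmono k hk)
    have hIVT : ∀ i j, i ≤ j → j ≤ r → ∀ u', σ i ≤ u' → u' ≤ σ j →
        ∃ u₀, u₀ ∈ Set.Icc (s i) (s j) ∧ lam n u₀ = u' := by
      intro i j hij hjr u' h1 h2
      obtain ⟨u₀, hu₀, hl⟩ := intermediate_value_Icc (hsmono' i j hij hjr)
        hcont.continuousOn (show u' ∈ Set.Icc (lam n (s i)) (lam n (s j)) from ⟨h1, h2⟩)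
      exact ⟨u₀, hu₀, hl⟩
    have hσosc : ∀ k < r, ∀ u' ∈ Set.Ico (σ k) (σ (k+1)), ∀ v' ∈ Set.Ico (σ k) (σ (k+1)),
        ‖yn n u' - yn n v'‖ ≤ ρ := by
      intro k hk u' hu' v' hv'
      obtain ⟨u₀, hu₀, hlu⟩ := hIVT k (k+1) (Nat.le_succ k) hk u' hu'.1 hu'.2.le
      obtain ⟨v₀, hv₀, hlv⟩ := hIVT k (k+1) (Nat.le_succ k) hk v' hv'.1 hv'.2.le
      have hu₀lt : u₀ < s (k+1) := by
        by_contra hcon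
        push_neg at hcon
        have : σ (k+1) ≤ u' := hlu ▸ hsm.monotone hcon
        linarith [hu'.2]
      have hv₀lt : v₀ < s (k+1) := by
        by_contra hcon
        push_neg at hcon
        have : σ (k+1) ≤ v' := hlv ▸ hsm.monotone hcon
        linarith [hv'.2]
      have hkr : s (k+1) ≤ s r := hsmono' (k+1) r hk le_rfl
      have hu₀Q : u₀ ∈ Set.Icc (0:ℝ) Q := ⟨(hsnn k hk.le).trans hu₀.1, (hu₀.2.trans hkr).trans hsrQ.le⟩
      have hv₀Q : v₀ ∈ Set.Icc (0:ℝ) Q := ⟨(hsnn k hk.le).trans hv₀.1, (hv₀.2.trans hkr).trans hsrQ.le⟩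
      have h1 := (hJ u₀ hu₀Q).2
      have h2 := (hJ v₀ hv₀Q).2
      rw [hlu] at h1
      rw [hlv] at h2
      have h3 := hsosc k hk u₀ ⟨hu₀.1, hu₀lt⟩ v₀ ⟨hv₀.1, hv₀lt⟩
      calc ‖yn n u' - yn n v'‖
          = ‖(yn n u' - y u₀) + (y u₀ - y v₀) + (y v₀ - yn n v')‖ := by congr 1; abel
        _ ≤ ‖(yn n u' - y u₀) + (y u₀ - y v₀)‖ + ‖y v₀ - yn n v'‖ := norm_add_le _ _
        _ ≤ ‖yn n u' - y u₀‖ + ‖y u₀ - y v₀‖ + ‖y v₀ - yn n v'‖ := by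
            linarith [norm_add_le (yn n u' - y u₀) (y u₀ - y v₀)]
        _ ≤ ρ := by rw [norm_sub_rev (y v₀)]; linarith
    have hqσ : q ≤ σ r := by
      have hJQ := (hN n hn Q ⟨hQpos.le, le_rfl⟩).1
      have h1 : Q - εJ ≤ lam n Q := by
        have := abs_le.mp hJQ
        linarith [this.1]
      have hσr : σ r = lam n Q := by rw [hσdef]; simp only; rw [hsrQ]
      rw [hσr]
      rw [hQdef] at h1 ⊢
      linarith
    have hMn : ∀ u' ∈ Set.Icc (0:ℝ) (σ r), ‖yn n u' - a‖ ≤ MM := by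
      intro u' hu'
      obtain ⟨u₀, hu₀, hlu⟩ := hIVT 0 r (Nat.zero_le r) le_rfl u' (hσ0 ▸ hu'.1) hu'.2
      have hu₀Q : u₀ ∈ Set.Icc (0:ℝ) (s r) := ⟨hs0 ▸ hu₀.1, hu₀.2⟩
      have h1 := (hJ u₀ ⟨hu₀Q.1, hu₀Q.2.trans hsrQ.le⟩).2
      rw [hlu] at h1
      have h2 := hMy u₀ hu₀Q
      calc ‖yn n u' - a‖ = ‖(yn n u' - y u₀) + (y u₀ - a)‖ := by congr 1; abel
        _ ≤ ‖yn n u' - y u₀‖ + ‖y u₀ - a‖ := norm_add_le _ _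
        _ ≤ MM := by rw [hMMdef]; linarith
    have hmain := main_bound hconv hproj hρ hball (Nat.cast_nonneg n) (hxn n)
      hr hσ0 hσmono hσosc hMn hq.le hqσ
    constructor
    · intro t ht
      have hb := hmain.1 t ht
      calc ‖xn n t‖ = ‖(xn n t - a) + a‖ := by congr 1; abel
        _ ≤ ‖xn n t - a‖ + ‖a‖ := norm_add_le _ _
        _ ≤ B1 := by rw [hB1def]; linarith
    · exact hmain.2
  have hEach : ∀ n : ℕ, ∃ C1 C2 : ℝ, (∀ t ∈ Set.Icc (0:ℝ) q, ‖xn n t‖ ≤ C1) ∧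
      ((n:ℝ) * ∫ u in Set.Ioc (0:ℝ) q, ‖xn n u - proj (xn n u)‖ ≤ C2) := by
    intro n
    obtain ⟨hyn1, hyn2⟩ := hyn n
    obtain ⟨r', hr', s', hs0', hsrQ', hsmono2, hsosc2⟩ :=
      cadlag_subdiv (yn n) hyn1 hyn2 hQpos hρ
    obtain ⟨Mn, hMn⟩ := subdiv_bound (yn n) a hρ.le hs0' hsmono2 hsosc2
    have hqr' : q ≤ s' r' := by rw [hsrQ', hQdef]; linarith
    have hmain := main_bound hconv hproj hρ hball (Nat.cast_nonneg n) (hxn n)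
      hr' hs0' hsmono2 hsosc2 hMn hq.le hqr'
    refine ⟨bfun Mn ρ r' + ρ + ‖a‖, _, fun t ht => ?_, hmain.2⟩
    have hb := hmain.1 t ht
    calc ‖xn n t‖ = ‖(xn n t - a) + a‖ := by congr 1; abel
      _ ≤ ‖xn n t - a‖ + ‖a‖ := norm_add_le _ _
      _ ≤ bfun Mn ρ r' + ρ + ‖a‖ := by linarith
  choose F1 F2 hF1 hF2 using hEach
  have hrw : ∀ n : ℕ, (∫ s in (0:ℝ)..q, ‖xn n s - proj (xn n s)‖)
      = ∫ u in Set.Ioc (0:ℝ) q, ‖xn n u - proj (xn n u)‖ :=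
    fun n => intervalIntegral.integral_of_le hq.le
  constructor
  · refine ⟨max B1 0 + ∑ j ∈ Finset.range N, max (F1 j) 0, fun n t ht => ?_⟩
    have hsum_nonneg : (0:ℝ) ≤ ∑ j ∈ Finset.range N, max (F1 j) 0 :=
      Finset.sum_nonneg fun j _ => le_max_right _ _
    rcases lt_or_ge n N with hlt | hge
    · have h1 := hF1 n t ht
      have h2 : max (F1 n) 0 ≤ ∑ j ∈ Finset.range N, max (F1 j) 0 :=
        Finset.single_le_sum (fun j _ => le_max_right (F1 j) 0) (Finset.mem_range.2 hlt)
      linarith [le_max_left (F1 n) (0:ℝ), le_max_left B1 (0:ℝ), le_max_right B1 (0:ℝ)]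
    · have h1 := (hUnif n hge).1 t ht
      linarith [le_max_left B1 (0:ℝ)]
  · refine ⟨max B2 0 + ∑ j ∈ Finset.range N, max (F2 j) 0, fun n => ?_⟩
    rw [hrw n]
    have hsum_nonneg : (0:ℝ) ≤ ∑ j ∈ Finset.range N, max (F2 j) 0 :=
      Finset.sum_nonneg fun j _ => le_max_right _ _
    rcases lt_or_ge n N with hlt | hge
    · have h1 := hF2 n
      have h2 : max (F2 n) 0 ≤ ∑ j ∈ Finset.range N, max (F2 j) 0 :=
        Finset.single_le_sum (fun j _ => le_max_right (F2 j) 0) (Finset.mem_range.2 hlt)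
      linarith [le_max_left (F2 n) (0:ℝ), le_max_right B2 (0:ℝ)]
    · have h1 := (hUnif n hge).2
      linarith [le_max_left B2 (0:ℝ)]
end

section
/- For the solution x of the Skorokhod problem on a convex domain D associated with a càdlàg y with y_0 ∈ closure D, the jumps satisfy x_t = Π(x_{t-} + Δy_t) for every t > 0, where Π is the metric projection onto closure D. -/
open scoped RealInnerProductSpace
open MeasureTheory Set Filter

variable {d : ℕ}

lemma proj_unique' {d : ℕ} {C : Set (EuclideanSpace ℝ (Fin d))} (hC : Convex ℝ C)
    {proj : EuclideanSpace ℝ (Fin d) → EuclideanSpace ℝ (Fin d)}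
    (hproj : IsProjOn C proj) {z w : EuclideanSpace ℝ (Fin d)} (hw : w ∈ C)
    (hmin : ∀ u ∈ C, dist z w ≤ dist z u) : proj z = w := by
  obtain ⟨hpz, hple⟩ := hproj z
  have h1 : dist z (proj z) = dist z w := le_antisymm (hple w hw) (hmin _ hpz)
  set m : EuclideanSpace ℝ (Fin d) := (1/2 : ℝ) • (proj z + w) with hm
  have hmC : m ∈ C := by
    have := hC hpz hw (by norm_num : (0:ℝ) ≤ 1/2) (by norm_num : (0:ℝ) ≤ 1/2) (by norm_num)
    simpa [hm, smul_add] using this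
  have hmge : dist z w ≤ dist z m := hmin m hmC
  have key := parallelogram_law_with_norm ℝ (z - proj z) (z - w)
  have e1 : (z - proj z) + (z - w) = (2:ℝ) • (z - m) := by
    rw [hm]; module
  have e2 : (z - proj z) - (z - w) = w - proj z := by abel
  rw [e1, e2] at key
  have e3 : ‖(2:ℝ) • (z - m)‖ = 2 * ‖z - m‖ := by
    rw [norm_smul]; simp
  rw [e3] at key
  have d1 : dist z (proj z) = ‖z - proj z‖ := dist_eq_norm _ _
  have d2 : dist z w = ‖z - w‖ := dist_eq_norm _ _
  have d3 : dist z m = ‖z - m‖ := dist_eq_norm _ _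
  have hzero : ‖w - proj z‖ = 0 := by
    nlinarith [norm_nonneg (w - proj z), norm_nonneg (z - m), norm_nonneg (z - w),
      h1, hmge, key]
  have := norm_eq_zero.1 hzero
  have := sub_eq_zero.1 this
  exact this.symm

lemma proj_fixed' {d : ℕ} {C : Set (EuclideanSpace ℝ (Fin d))} (hC : Convex ℝ C)
    {proj : EuclideanSpace ℝ (Fin d) → EuclideanSpace ℝ (Fin d)}
    (hproj : IsProjOn C proj) {z : EuclideanSpace ℝ (Fin d)} (hz : z ∈ C) : proj z = z :=
  proj_unique' hC hproj hz (fun u _ => by simp [dist_nonneg])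

lemma proj_eq_of_normal' {d : ℕ} {C : Set (EuclideanSpace ℝ (Fin d))} (hC : Convex ℝ C)
    {proj : EuclideanSpace ℝ (Fin d) → EuclideanSpace ℝ (Fin d)}
    (hproj : IsProjOn C proj) {p n : EuclideanSpace ℝ (Fin d)} (hp : p ∈ C) {c : ℝ}
    (hc : 0 ≤ c) (hn : ∀ w ∈ C, 0 ≤ ⟪w - p, n⟫) : proj (p - c • n) = p := by
  apply proj_unique' hC hproj hp
  intro u hu
  rw [dist_eq_norm, dist_eq_norm]
  have e1 : p - c • n - p = -(c • n) := by abel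
  have e2 : p - c • n - u = (p - u) - c • n := by abel
  rw [e1, e2, norm_neg]
  have key := norm_sub_sq_real (p - u) (c • n)
  have hip : ⟪p - u, c • n⟫ = c * ⟪p - u, n⟫ := real_inner_smul_right _ _ _
  have hip2 : ⟪p - u, n⟫ = -⟪u - p, n⟫ := by
    rw [← inner_neg_left]; congr 1; abel
  have hge : 0 ≤ ⟪u - p, n⟫ := hn u hu
  nlinarith [norm_nonneg ((p - u) - c • n), norm_nonneg (c • n), norm_nonneg (p - u),
    mul_nonneg hc hge]

lemma aesm_of_pieces {d : ℕ} (v : StieltjesFunction ℝ)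
    (nv : ℝ → EuclideanSpace ℝ (Fin d)) (t : ℝ) (ht : 0 < t)
    (h : ∀ s0 ∈ Ioo 0 t, AEStronglyMeasurable nv ((v.measure).restrict (Ioc 0 s0))) :
    AEStronglyMeasurable nv ((v.measure).restrict (Ioc 0 t)) := by
  set μ := v.measure
  rw [aestronglyMeasurable_iff_aemeasurable]
  have hsub : Ioo 0 t ⊆ ⋃ n : ℕ, Ioc 0 (t - t/(n+1)) := by
    intro s hs
    obtain ⟨n, hn⟩ := exists_nat_ge (t/(t-s))
    refine mem_iUnion.2 ⟨n, ?_⟩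
    have hts : 0 < t - s := by linarith [hs.2]
    have : t/(n+1) ≤ t - s := by
      rw [div_le_iff₀ (by positivity)]
      calc t = (t/(t-s)) * (t-s) := by field_simp
      _ ≤ (n+1) * (t - s) := by
        apply mul_le_mul_of_nonneg_right (by linarith) hts.le
      _ = (t-s) * (n+1) := by ring
    exact ⟨hs.1, by linarith⟩
  have hcup : Ioc 0 t = Ioo 0 t ∪ {t} := (Set.Ioo_union_right ht).symm
  have hU : AEMeasurable nv (μ.restrict (⋃ n : ℕ, Ioc 0 (t - t/(n+1)))) := by
    rw [aemeasurable_iUnion_iff]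
    intro n
    rcases le_or_gt (t - t/(n+1)) 0 with hle | hlt
    · rw [Set.Ioc_eq_empty (not_lt.2 hle), Measure.restrict_empty]
      exact aemeasurable_zero_measure
    · refine (aestronglyMeasurable_iff_aemeasurable.1 (h _ ⟨hlt, ?_⟩))
      have : 0 < t/(n+1) := by positivity
      linarith
  have hOoo : AEMeasurable nv (μ.restrict (Ioo 0 t)) :=
    hU.mono_measure (Measure.restrict_mono hsub le_rfl)
  have hsing : AEMeasurable nv (μ.restrict ({t} : Set ℝ)) := by
    have hae : nv =ᵐ[μ.restrict ({t} : Set ℝ)] fun _ => nv t := by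
      rw [Filter.EventuallyEq, ae_iff]
      apply measure_mono_null (t := ({t}ᶜ : Set ℝ))
      · intro s hs
        simp only [mem_setOf_eq] at hs
        simp only [mem_compl_iff, mem_singleton_iff]
        rintro rfl; exact hs rfl
      · rw [Measure.restrict_apply (measurableSet_singleton t).compl]
        simp
    exact aemeasurable_const.congr hae.symm
  rw [hcup, aemeasurable_union_iff]
  exact ⟨hOoo, hsing⟩

/-- Jump structure of the solution of the Skorokhod problem: `x_t = Π(x_{t-} + Δy_t)`. -/
theorem stmt12 (d : ℕ) (D : Set (EuclideanSpace ℝ (Fin d)))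
    (hD : IsOpen D) (hconv : Convex ℝ D) (hne : D.Nonempty)
    (proj : EuclideanSpace ℝ (Fin d) → EuclideanSpace ℝ (Fin d))
    (hproj : IsProjOn (closure D) proj)
    (y x : ℝ → EuclideanSpace ℝ (Fin d))
    (hy : Cadlag y) (hy0 : y 0 ∈ closure D)
    (hx : IsSkorokhodSol D y x)
    (t : ℝ) (ht : 0 < t)
    (ylim xlim : EuclideanSpace ℝ (Fin d))
    (hylim : Filter.Tendsto y (nhdsWithin t (Set.Iio t)) (nhds ylim))
    (hxlim : Filter.Tendsto x (nhdsWithin t (Set.Iio t)) (nhds xlim)) :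
    x t = proj (xlim + (y t - ylim)) := by
  obtain ⟨k, v, nv, hxyk, hxD, hk0, hv0, hkint, hnormal, hvfr⟩ := hx
  have hCconv : Convex ℝ (closure D) := hconv.closure
  set μ := v.measure with hμ
  set l := nhdsWithin t (Set.Iio t) with hl
  have h1 : ∀ᶠ s in l, 0 < s :=
    eventually_nhdsWithin_of_eventually_nhds (eventually_gt_nhds ht)
  have h2 : ∀ᶠ s in l, s < t := eventually_mem_nhdsWithin
  have hklim : Tendsto k l (nhds (xlim - ylim)) := by
    refine (hxlim.sub hylim).congr' ?_
    filter_upwards [h1] with s hs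
    rw [hxyk s hs.le]; abel
  by_cases hmeas : AEStronglyMeasurable nv (μ.restrict (Ioc 0 t))
  · -- integrable case
    have hfin : μ (Ioc 0 t) < ⊤ := by
      rw [hμ, v.measure_Ioc]; exact ENNReal.ofReal_lt_top
    have hae1 : ∀ᵐ s ∂μ.restrict (Ioc 0 t), ‖nv s‖ ≤ 1 := by
      rw [ae_restrict_iff' measurableSet_Ioc]
      have hS : ∀ᵐ s ∂μ, ¬(0 ≤ s ∧ x s ∉ frontier D) := by
        rw [ae_iff]
        simpa using hvfr
      filter_upwards [hS] with s hs hmem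
      have hfr : x s ∈ frontier D := by
        by_contra hfr
        exact hs ⟨hmem.1.le, hfr⟩
      rw [(hnormal s hmem.1.le hfr).1]
    have hint : IntegrableOn nv (Ioc 0 t) μ := by
      have hc1 : IntegrableOn (fun _ => (1:ℝ)) (Ioc 0 t) μ :=
        integrableOn_const hfin.ne
      exact Integrable.mono' hc1 hmeas hae1
    set c := (μ ({t} : Set ℝ)).toReal with hc
    have hsing : ∫ s in ({t} : Set ℝ), nv s ∂μ = c • nv t := by
      rw [Measure.restrict_singleton, integral_smul_measure, integral_dirac]
    have key : k t - (xlim - ylim) = c • nv t := by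
      have T1 : Tendsto (fun s => k t - k s) l (nhds (k t - (xlim - ylim))) :=
        tendsto_const_nhds.sub hklim
      have heq : ∀ᶠ s in l, k t - k s = (∫ u in Ioo s t, nv u ∂μ) + c • nv t := by
        filter_upwards [h1, h2] with s hs1 hs2
        rw [hkint t ht.le, hkint s hs1.le]
        have hIs : IntegrableOn nv (Ioc 0 s) μ :=
          hint.mono_set (Ioc_subset_Ioc_right hs2.le)
        have hIst : IntegrableOn nv (Ioc s t) μ :=
          hint.mono_set (Ioc_subset_Ioc_left hs1.le)
        have hIoo : IntegrableOn nv (Ioo s t) μ :=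
          hIst.mono_set Ioo_subset_Ioc_self
        have hIt : IntegrableOn nv ({t} : Set ℝ) μ := by
          apply hint.mono_set
          intro u hu
          rw [mem_singleton_iff] at hu
          rw [hu]
          exact ⟨ht, le_rfl⟩
        have hsplit : ∫ u in Ioc 0 t, nv u ∂μ
            = (∫ u in Ioc 0 s, nv u ∂μ) + ∫ u in Ioc s t, nv u ∂μ := by
          rw [← setIntegral_union (Set.Ioc_disjoint_Ioc_of_le le_rfl) measurableSet_Ioc hIs hIst,
            Set.Ioc_union_Ioc_eq_Ioc hs1.le hs2.le]
        have hsplit2 : ∫ u in Ioc s t, nv u ∂μ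
            = (∫ u in Ioo s t, nv u ∂μ) + c • nv t := by
          rw [← hsing, ← setIntegral_union (by simp [Set.disjoint_singleton_right])
            (measurableSet_singleton t) hIoo hIt, Set.Ioo_union_right hs2]
        rw [hsplit, hsplit2]; abel
      have T3 : Tendsto (fun s => ∫ u in Ioo s t, nv u ∂μ) l (nhds 0) := by
        apply squeeze_zero_norm' (a := fun s => Function.leftLim v t - v s)
        · filter_upwards [h1, h2] with s hs1 hs2
          have hb : ‖∫ u in Ioo s t, nv u ∂μ‖ ≤ 1 * (μ (Ioo s t)).toReal :=
            norm_setIntegral_le_of_norm_le_const_ae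
              (lt_of_le_of_lt (measure_mono
                (fun u hu => mem_Ioc.2 ⟨lt_trans hs1 hu.1, hu.2.le⟩)) hfin)
              (ae_mono (Measure.restrict_mono
                (fun u hu => mem_Ioc.2 ⟨lt_trans hs1 hu.1, hu.2.le⟩) le_rfl) hae1)
          have hmono : v s ≤ Function.leftLim v t := v.mono.le_leftLim hs2
          have htr : (μ (Ioo s t)).toReal = Function.leftLim (v : ℝ → ℝ) t - v s := by
            rw [hμ, v.measure_Ioo, ENNReal.toReal_ofReal (by linarith)]
          rw [one_mul, htr] at hb
          exact hb
        · have hvt := v.mono.tendsto_leftLim t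
          have := (tendsto_const_nhds (x := Function.leftLim (v : ℝ → ℝ) t) (f := l)).sub hvt
          simpa using this
      have T2 : Tendsto (fun s => k t - k s) l (nhds (c • nv t)) := by
        refine Tendsto.congr' (heq.mono fun s hs => hs.symm) ?_
        have := T3.add (tendsto_const_nhds (x := c • nv t) (f := l))
        simpa using this
      exact tendsto_nhds_unique T1 T2
    have hz : xlim + (y t - ylim) = x t - c • nv t := by
      rw [← key, hxyk t ht.le]; abel
    rw [hz]
    by_cases hc0 : c = 0
    · rw [hc0, zero_smul, sub_zero]
      exact (proj_fixed' hCconv hproj (hxD t ht.le)).symm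
    · have hμt : μ ({t} : Set ℝ) ≠ 0 := by
        intro h
        exact hc0 (by rw [hc, h]; simp)
      have hfr : x t ∈ frontier D := by
        by_contra hfr
        exact hμt (measure_mono_null (fun s hs => by
          rw [mem_singleton_iff] at hs; subst hs; exact ⟨ht.le, hfr⟩) hvfr)
      obtain ⟨hn1, hn2⟩ := hnormal t ht.le hfr
      exact (proj_eq_of_normal' hCconv hproj (hxD t ht.le) ENNReal.toReal_nonneg hn2).symm
  · -- non-measurable case: k vanishes near t
    have hex : ∃ s0 ∈ Ioo 0 t, ¬ AEStronglyMeasurable nv (μ.restrict (Ioc 0 s0)) := by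
      by_contra h
      push_neg at h
      exact hmeas (aesm_of_pieces v nv t ht h)
    obtain ⟨s0, hs0, hs0m⟩ := hex
    have hknull : ∀ s, s0 ≤ s → s ≤ t → k s = 0 := by
      intro s hsa hsb
      rw [hkint s (le_trans hs0.1.le hsa)]
      apply integral_undef
      intro hI
      exact hs0m (hI.aestronglyMeasurable.mono_measure
        (Measure.restrict_mono (Ioc_subset_Ioc_right hsa) le_rfl))
    have hkt : k t = 0 := hknull t hs0.2.le le_rfl
    have hlim0 : Tendsto k l (nhds 0) := by
      refine (tendsto_const_nhds (x := (0 : EuclideanSpace ℝ (Fin d))) (f := l)).congr' ?_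
      have h3 : ∀ᶠ s in l, s0 < s :=
        eventually_nhdsWithin_of_eventually_nhds (eventually_gt_nhds hs0.2)
      filter_upwards [h2, h3] with s ha hb
      exact (hknull s hb.le ha.le).symm
    have hxy0 : xlim - ylim = 0 := tendsto_nhds_unique hklim hlim0
    have hz : xlim + (y t - ylim) = x t := by
      rw [hxyk t ht.le, hkt]
      have : xlim = ylim := by rwa [sub_eq_zero] at hxy0
      rw [this]; abel
    rw [hz]
    exact (proj_fixed' hCconv hproj (hxD t ht.le)).symm
end
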